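/- arXiv:1611.07306 — 7 statements merged into one kernel-verified Lean document; each statement's English description precedes it below -/
import Mathlib

section
/- (Macaulay's basis theorem) Let K be a field, σ a monomial order on P = K[x₁,…,xₙ], and I ⊆ P an ideal. Then the residue classes in P/I of the monomials X^a that do not belong to the leading-term ideal LT_σ(I) form a basis of P/I as a K-vector space. -/
open MvPolynomial

/-- A monomial order on the exponent vectors `ν →₀ ℕ`: a linear order compatible with
addition and having `0` as least element. -/
structure MonomialOrd (ν : Type) where
  le : (ν →₀ ℕ) → (ν →₀ ℕ) → Prop
  le_refl : ∀ a, le a a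
  le_trans : ∀ a b c, le a b → le b c → le a c
  le_antisymm : ∀ a b, le a b → le b a → a = b
  le_total : ∀ a b, le a b ∨ le b a
  add_le_add : ∀ a b c, le a b → le (a + c) (b + c)
  zero_le : ∀ a, le 0 a

/-- `a` is the σ-largest exponent vector in the support of `f`
(so `X^a` is the σ-leading monomial of `f`). -/
def IsLeadingExp {K : Type} [Field K] {ν : Type} (σ : MonomialOrd ν)
    (f : MvPolynomial ν K) (a : ν →₀ ℕ) : Prop :=
  a ∈ f.support ∧ ∀ b ∈ f.support, σ.le b a

/-- The leading-term ideal `LT_σ(I)`: the ideal generated by the σ-leading monomials of the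
nonzero elements of `I`. -/
noncomputable def ltIdeal {K : Type} [Field K] {ν : Type} (σ : MonomialOrd ν)
    (I : Ideal (MvPolynomial ν K)) : Ideal (MvPolynomial ν K) :=
  Ideal.span { m | ∃ f ∈ I, ∃ a, IsLeadingExp σ f a ∧ m = monomial a (1 : K) }

/-- `G` is a σ-Gröbner basis of `I`: a finite subset of `I` whose σ-leading monomials
generate `LT_σ(I)`. -/
def IsGroebnerBasis {K : Type} [Field K] {ν : Type} (σ : MonomialOrd ν)
    (I : Ideal (MvPolynomial ν K)) (G : Finset (MvPolynomial ν K)) : Prop :=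
  ↑G ⊆ (I : Set (MvPolynomial ν K)) ∧
    Ideal.span { m | ∃ g ∈ G, ∃ a, IsLeadingExp σ g a ∧ m = monomial a (1 : K) } = ltIdeal σ I

namespace MacaulayAux

variable {K : Type} [Field K] {ν : Type}

/-- A monomial order refines the pointwise (divisibility) order. -/
lemma le_of_pointwise_le (σ : MonomialOrd ν) {a b : ν →₀ ℕ} (h : a ≤ b) : σ.le a b := by
  obtain ⟨c, rfl⟩ := le_iff_exists_add.mp h
  have := σ.add_le_add 0 c a (σ.zero_le c)
  rw [zero_add, add_comm c a] at this
  exact this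

/-- The strict order associated to a monomial order is well founded (Dickson's lemma). -/
lemma wf_lt [Finite ν] (σ : MonomialOrd ν) :
    WellFounded (fun a b : ν →₀ ℕ => σ.le a b ∧ a ≠ b) := by
  haveI : IsIrrefl (ν →₀ ℕ) (fun a b => σ.le a b ∧ a ≠ b) := ⟨fun _ h => h.2 rfl⟩
  haveI : IsTrans (ν →₀ ℕ) (fun a b => σ.le a b ∧ a ≠ b) :=
    ⟨fun a b c hab hbc => ⟨σ.le_trans _ _ _ hab.1 hbc.1,
      fun h => hab.2 (σ.le_antisymm _ _ hab.1 (h ▸ hbc.1))⟩⟩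
  haveI : IsStrictOrder (ν →₀ ℕ) (fun a b => σ.le a b ∧ a ≠ b) := { }
  rw [RelEmbedding.wellFounded_iff_isEmpty]
  constructor
  intro e
  obtain ⟨m, k, hmk, hle⟩ :=
    wellQuasiOrdered_le (α := ν →₀ ℕ) (fun i => e i)
  have h2 : σ.le (e k) (e m) ∧ e k ≠ e m := e.map_rel_iff.mpr hmk
  exact h2.2 (σ.le_antisymm _ _ h2.1 (le_of_pointwise_le σ hle))

lemma exists_max (σ : MonomialOrd ν) {s : Finset (ν →₀ ℕ)} (hs : s.Nonempty) :
    ∃ a ∈ s, ∀ b ∈ s, σ.le b a := by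
  classical
  induction s using Finset.induction_on with
  | empty => exact absurd hs (by simp)
  | @insert a t ha ih =>
    rcases t.eq_empty_or_nonempty with rfl | ht
    · exact ⟨a, by simp, by simpa using σ.le_refl a⟩
    · obtain ⟨m, hm, hmax⟩ := ih ht
      rcases σ.le_total a m with h | h
      · exact ⟨m, Finset.mem_insert_of_mem hm, by
          intro b hb
          rcases Finset.mem_insert.mp hb with rfl | hb
          · exact h
          · exact hmax b hb⟩
      · exact ⟨a, Finset.mem_insert_self a t, by
          intro b hb
          rcases Finset.mem_insert.mp hb with rfl | hb
          · exact σ.le_refl b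
          · exact σ.le_trans _ _ _ (hmax b hb) h⟩

lemma exists_leadingExp (σ : MonomialOrd ν) {f : MvPolynomial ν K} (hf : f ≠ 0) :
    ∃ a, IsLeadingExp σ f a := by
  obtain ⟨a, ha, hmax⟩ := exists_max σ (support_nonempty.mpr hf)
  exact ⟨a, ha, hmax⟩

/-- If a monomial lies in `LT_σ(I)` then its exponent is divisible by the leading exponent of
some element of `I`. -/
lemma exists_divisor {σ : MonomialOrd ν} {I : Ideal (MvPolynomial ν K)} {a : ν →₀ ℕ}
    (h : monomial a (1 : K) ∈ ltIdeal σ I) :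
    ∃ g ∈ I, ∃ b, IsLeadingExp σ g b ∧ b ≤ a := by
  classical
  have key : ∀ x ∈ ltIdeal σ I, ∀ u : ν →₀ ℕ, coeff u x ≠ 0 →
      ∃ g ∈ I, ∃ b, IsLeadingExp σ g b ∧ b ≤ u := by
    intro x hx
    refine Submodule.span_induction ?_ ?_ ?_ ?_ hx
    · rintro m ⟨f, hfI, b, hb, rfl⟩ u hu
      rw [coeff_monomial] at hu
      split_ifs at hu with hbu
      · exact ⟨f, hfI, b, hb, hbu ▸ le_rfl⟩
      · exact absurd rfl hu
    · intro u hu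
      exact absurd (coeff_zero u) hu
    · intro x y hx hy px py u hu
      rcases (by by_contra hc; push_neg at hc
                 exact hu (by rw [coeff_add, hc.1, hc.2, add_zero]) :
          coeff u x ≠ 0 ∨ coeff u y ≠ 0) with h' | h'
      · exact px u h'
      · exact py u h'
    · intro r x hx px u hu
      rw [smul_eq_mul, coeff_mul] at hu
      obtain ⟨⟨v, w⟩, hvw, hne⟩ := Finset.exists_ne_zero_of_sum_ne_zero hu
      have hw : coeff w x ≠ 0 := right_ne_zero_of_mul hne
      obtain ⟨g, hg, b, hb, hbw⟩ := px w hw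
      refine ⟨g, hg, b, hb, hbw.trans ?_⟩
      rw [Finset.HasAntidiagonal.mem_antidiagonal] at hvw
      exact hvw ▸ le_add_self
  have := key _ h a (by simp [coeff_monomial])
  exact this

lemma mk_smul {I : Ideal (MvPolynomial ν K)} (c : K) (p : MvPolynomial ν K) :
    Ideal.Quotient.mk I (c • p) = c • Ideal.Quotient.mk I p := by
  rw [← Ideal.Quotient.mkₐ_eq_mk K]
  exact map_smul (Ideal.Quotient.mkₐ K I) c p

end MacaulayAux

open MacaulayAux in
/-- Macaulay's basis theorem: the residue classes of the monomials not in
`LT_σ(I)` form a `K`-vector-space basis of `P/I`. -/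
theorem macaulay_basis_theorem {K : Type} [Field K] {n : ℕ}
    (σ : MonomialOrd (Fin n)) (I : Ideal (MvPolynomial (Fin n) K)) :
    LinearIndependent K
      (fun a : {a : Fin n →₀ ℕ // monomial a (1 : K) ∉ ltIdeal σ I} =>
        Ideal.Quotient.mk I (monomial a.1 (1 : K))) ∧
    Submodule.span K
      (Set.range (fun a : {a : Fin n →₀ ℕ // monomial a (1 : K) ∉ ltIdeal σ I} =>
        Ideal.Quotient.mk I (monomial a.1 (1 : K)))) = ⊤ := by
  classical
  set S := Submodule.span K
      (Set.range (fun a : {a : Fin n →₀ ℕ // monomial a (1 : K) ∉ ltIdeal σ I} =>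
        Ideal.Quotient.mk I (monomial a.1 (1 : K)))) with hS
  constructor
  · -- linear independence
    rw [linearIndependent_iff']
    intro s g hsum i hi
    by_contra hgi
    set f : MvPolynomial (Fin n) K := ∑ j ∈ s, monomial j.1 (g j) with hf
    have hcoef : ∀ u : Fin n →₀ ℕ, coeff u f ≠ 0 → ∃ j ∈ s, j.1 = u := by
      intro u hu
      by_contra hc
      push_neg at hc
      apply hu
      rw [hf, coeff_sum]
      refine Finset.sum_eq_zero fun j hj => ?_
      rw [coeff_monomial, if_neg (hc j hj)]
    have hcoefj : ∀ j ∈ s, coeff j.1 f = g j := by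
      intro j hj
      rw [hf, coeff_sum]
      rw [Finset.sum_eq_single j (fun k hk hkj => by
        rw [coeff_monomial, if_neg (fun h => hkj (Subtype.ext h))])
        (fun h => absurd hj h)]
      rw [coeff_monomial, if_pos rfl]
    have hfI : f ∈ I := by
      rw [← Ideal.Quotient.eq_zero_iff_mem, hf, map_sum, ← hsum]
      refine Finset.sum_congr rfl fun j _ => ?_
      have : monomial j.1 (g j) = g j • monomial j.1 (1 : K) := by
        rw [smul_monomial, smul_eq_mul, mul_one]
      rw [this, mk_smul]
    have hf0 : f ≠ 0 := fun h => hgi (by rw [← hcoefj i hi, h, coeff_zero])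
    obtain ⟨a, ha⟩ := exists_leadingExp σ hf0
    obtain ⟨j, hjs, hja⟩ := hcoef a (mem_support_iff.mp ha.1)
    exact j.2 (hja ▸ Ideal.subset_span ⟨f, hfI, a, ha, rfl⟩)
  · -- spanning
    have main : ∀ a : Fin n →₀ ℕ, ∀ f : MvPolynomial (Fin n) K, IsLeadingExp σ f a →
        Ideal.Quotient.mk I f ∈ S := by
      intro a
      induction a using (wf_lt σ).induction with
      | _ a IH =>
      intro f hf
      have hfa : coeff a f ≠ 0 := mem_support_iff.mp hf.1
      have step : ∀ f' : MvPolynomial (Fin n) K, (∀ u ∈ f'.support, σ.le u a) →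
          coeff a f' = 0 → Ideal.Quotient.mk I f' ∈ S := by
        intro f' hsupp hca
        by_cases h0 : f' = 0
        · rw [h0, map_zero]; exact Submodule.zero_mem S
        · obtain ⟨a', ha'⟩ := exists_leadingExp σ h0
          have h2 : a' ≠ a := fun h => (mem_support_iff.mp ha'.1) (h ▸ hca)
          exact IH a' ⟨hsupp _ ha'.1, h2⟩ f' ha'
      by_cases hmem : monomial a (1 : K) ∈ ltIdeal σ I
      · -- reduce by an element of I
        obtain ⟨g, hgI, b, hgb, hba⟩ := exists_divisor hmem
        set c := a - b with hc
        have hcb : c + b = a := by rw [hc, tsub_add_cancel_of_le hba]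
        have he : coeff b g ≠ 0 := mem_support_iff.mp hgb.1
        set h : MvPolynomial (Fin n) K := monomial c (coeff a f / coeff b g) * g with hh
        have hhI : h ∈ I := Ideal.mul_mem_left _ _ hgI
        have hcoeffh : coeff a h = coeff a f := by
          rw [hh, ← hcb, coeff_monomial_mul, div_mul_cancel₀ _ he]
        have hmk : Ideal.Quotient.mk I f = Ideal.Quotient.mk I (f - h) := by
          rw [map_sub, (Ideal.Quotient.eq_zero_iff_mem).mpr hhI, sub_zero]
        rw [hmk]
        refine step (f - h) ?_ (by rw [coeff_sub, hcoeffh, sub_self])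
        intro u hu
        have hu' : coeff u f ≠ 0 ∨ coeff u h ≠ 0 := by
          by_contra hcon
          push_neg at hcon
          exact (mem_support_iff.mp hu) (by rw [coeff_sub, hcon.1, hcon.2, sub_zero])
        rcases hu' with h' | h'
        · exact hf.2 u (mem_support_iff.mpr h')
        · rw [hh, coeff_monomial_mul'] at h'
          split_ifs at h' with hcu
          · have hug : coeff (u - c) g ≠ 0 := right_ne_zero_of_mul h'
            have := σ.add_le_add _ _ c (hgb.2 _ (mem_support_iff.mpr hug))
            rw [tsub_add_cancel_of_le hcu, add_comm b c, hcb] at this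
            exact this
          · exact absurd rfl h'
      · -- split off the leading monomial, which is a basis element
        have hsplit : f = monomial a (coeff a f) + (f - monomial a (coeff a f)) := by ring
        rw [hsplit, RingHom.map_add]
        refine Submodule.add_mem S ?_ ?_
        · have : monomial a (coeff a f) = coeff a f • monomial a (1 : K) := by
            rw [smul_monomial, smul_eq_mul, mul_one]
          rw [this, mk_smul]
          exact Submodule.smul_mem S _ (Submodule.subset_span ⟨⟨a, hmem⟩, rfl⟩)
        · refine step _ ?_ (by rw [coeff_sub, coeff_monomial, if_pos rfl, sub_self])
          intro u hu
          have hune : u ≠ a := fun h => (mem_support_iff.mp hu)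
            (by rw [h, coeff_sub, coeff_monomial, if_pos rfl, sub_self])
          have : coeff u f ≠ 0 := by
            have := mem_support_iff.mp hu
            rwa [coeff_sub, coeff_monomial, if_neg (fun h => hune h.symm), sub_zero] at this
          exact hf.2 u (mem_support_iff.mpr this)
    rw [eq_top_iff]
    rintro x -
    obtain ⟨f, rfl⟩ := Ideal.Quotient.mk_surjective x
    by_cases hf : f = 0
    · rw [hf, map_zero]; exact Submodule.zero_mem S
    · obtain ⟨a, ha⟩ := exists_leadingExp σ hf
      exact main a f ha
end

section
/- Let K be a field, σ a monomial order on P = K[x₁,…,xₙ], and I ⊆ P an ideal that is homogeneous with respect to the standard grading by total degree. Then P/I and P/LT_σ(I) have the same Hilbert function: for every d ≥ 0, the K-vector space dimension of P_d/I_d equals the dimension of P_d/(LT_σ(I))_d, where P_d is the space of homogeneous polynomials of total degree d, I_d = I ∩ P_d, and (LT_σ(I))_d = LT_σ(I) ∩ P_d. -/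
open MvPolynomial

lemma MonomialOrd.exists_max {ν : Type} (σ : MonomialOrd ν) (s : Finset (ν →₀ ℕ)) :
    s.Nonempty → ∃ a ∈ s, ∀ b ∈ s, σ.le b a := by
  classical
  induction s using Finset.induction_on with
  | empty => intro h; simp at h
  | @insert x s hx ih =>
    intro _
    rcases s.eq_empty_or_nonempty with rfl | hs
    · exact ⟨x, by simp, by simp [σ.le_refl]⟩
    · obtain ⟨a, ha, hmax⟩ := ih hs
      rcases σ.le_total x a with h | h
      · refine ⟨a, Finset.mem_insert_of_mem ha, ?_⟩
        intro b hb
        rcases Finset.mem_insert.mp hb with rfl | hb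
        · exact h
        · exact hmax b hb
      · refine ⟨x, Finset.mem_insert_self _ _, ?_⟩
        intro b hb
        rcases Finset.mem_insert.mp hb with rfl | hb
        · exact σ.le_refl b
        · exact σ.le_trans _ _ _ (hmax b hb) h

lemma MonomialOrd.le_of_le {ν : Type} (σ : MonomialOrd ν) {a b : ν →₀ ℕ} (h : a ≤ b) :
    σ.le a b := by
  obtain ⟨c, rfl⟩ := exists_add_of_le h
  have := σ.add_le_add 0 c a (σ.zero_le c)
  rwa [zero_add, add_comm c a] at this

lemma exists_leadingExp {K : Type} [Field K] {ν : Type} (σ : MonomialOrd ν)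
    {f : MvPolynomial ν K} (hf : f ≠ 0) : ∃ a, IsLeadingExp σ f a := by
  obtain ⟨a, ha, h⟩ := σ.exists_max f.support
    (Finset.nonempty_iff_ne_empty.mpr (by simpa using hf))
  exact ⟨a, ha, h⟩

lemma finrank_eq_card_lead {K : Type} [Field K] {ν : Type} (σ : MonomialOrd ν)
    (E : Finset (ν →₀ ℕ)) (V : Submodule K (MvPolynomial ν K))
    (hV : ∀ f ∈ V, f.support ⊆ E) (S : Finset (ν →₀ ℕ))
    (hS : ∀ a, a ∈ S ↔ ∃ f ∈ V, IsLeadingExp σ f a) :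
    Module.finrank K V = S.card := by
  classical
  have hchoice : ∀ a : S, ∃ f, f ∈ V ∧ IsLeadingExp σ f (a : ν →₀ ℕ) := by
    intro a
    obtain ⟨f, hf1, hf2⟩ := (hS a).mp a.2
    exact ⟨f, hf1, hf2⟩
  choose g hgV hglead using hchoice
  have hcoeff : ∀ a : S, MvPolynomial.coeff (a : ν →₀ ℕ) (g a) ≠ 0 := fun a =>
    MvPolynomial.mem_support_iff.mp (hglead a).1
  -- linear independence
  have hli : LinearIndependent K g := by
    rw [Fintype.linearIndependent_iff]
    intro c hc
    by_contra hne
    push_neg at hne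
    obtain ⟨i0, hi0⟩ := hne
    have hTne : (((Finset.univ.filter (fun i => c i ≠ 0)) : Finset S).image
        (fun i : S => (i : ν →₀ ℕ))).Nonempty :=
      (Finset.Nonempty.image ⟨i0, Finset.mem_filter.mpr ⟨Finset.mem_univ _, hi0⟩⟩ _)
    obtain ⟨aval, haval, hmax⟩ := σ.exists_max _ hTne
    obtain ⟨a, haT, rfl⟩ := Finset.mem_image.mp haval
    have hz : ∀ i : S, i ∈ Finset.univ → i ≠ a → c i * MvPolynomial.coeff (↑a) (g i) = 0 := by
      intro i _ hi
      by_cases hci : c i = 0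
      · simp [hci]
      · have hiT : i ∈ (Finset.univ.filter (fun i => c i ≠ 0) : Finset S) := Finset.mem_filter.mpr ⟨Finset.mem_univ _, hci⟩
        have h1 : σ.le (↑i) (↑a) := hmax _ (Finset.mem_image_of_mem _ hiT)
        have h2 : MvPolynomial.coeff (↑a : ν →₀ ℕ) (g i) = 0 := by
          by_contra hc2
          have h3 : σ.le (↑a) (↑i) := (hglead i).2 _ (MvPolynomial.mem_support_iff.mpr hc2)
          exact hi (Subtype.ext (σ.le_antisymm _ _ h1 h3))
        simp [h2]
    have hsum : MvPolynomial.coeff (↑a : ν →₀ ℕ) (∑ i, c i • g i)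
        = c a * MvPolynomial.coeff (↑a) (g a) := by
      rw [MvPolynomial.coeff_sum]
      simp_rw [MvPolynomial.coeff_smul, smul_eq_mul]
      exact Finset.sum_eq_single_of_mem a (Finset.mem_univ a) hz
    rw [hc] at hsum
    simp only [MvPolynomial.coeff_zero] at hsum
    have hca : c a ≠ 0 := (Finset.mem_filter.mp haT).2
    exact hcoeff a (by
      rcases mul_eq_zero.mp hsum.symm with h | h
      · exact absurd h hca
      · exact h)
  -- spanning
  have hspan : V = Submodule.span K (Set.range g) := by
    refine le_antisymm ?_ ?_
    · intro f hf
      have key : ∀ k : ℕ, ∀ f ∈ V, ∀ a, IsLeadingExp σ f a →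
          (E.filter fun b => σ.le b a).card ≤ k → f ∈ Submodule.span K (Set.range g) := by
        intro k
        induction k using Nat.strong_induction_on with
        | _ k ih =>
          intro f hfV a hfa hcard
          have haS : a ∈ S := (hS a).mpr ⟨f, hfV, hfa⟩
          set a' : S := ⟨a, haS⟩ with ha'
          set cc : K := MvPolynomial.coeff a f / MvPolynomial.coeff a (g a') with hcc
          set f' := f - cc • g a' with hf'
          have hf'V : f' ∈ V := V.sub_mem hfV (V.smul_mem _ (hgV a'))
          have hfeq : f = f' + cc • g a' := by rw [hf']; ring
          have hgmem : cc • g a' ∈ Submodule.span K (Set.range g) :=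
            Submodule.smul_mem _ _ (Submodule.subset_span ⟨a', rfl⟩)
          have hca' : MvPolynomial.coeff a f' = 0 := by
            rw [hf', MvPolynomial.coeff_sub, MvPolynomial.coeff_smul, smul_eq_mul, hcc,
              div_mul_cancel₀ _ (hcoeff a'), sub_self]
          by_cases h0 : f' = 0
          · rw [hfeq, h0, zero_add]
            exact hgmem
          · obtain ⟨b, hb⟩ := exists_leadingExp σ h0
            have hblea : σ.le b a := by
              have hbs : b ∈ f.support ∪ (cc • g a').support :=
                MvPolynomial.support_sub _ _ _ hb.1
              rcases Finset.mem_union.mp hbs with h | h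
              · exact hfa.2 _ h
              · exact (hglead a').2 _ (Finsupp.support_smul h)
            have hbne : b ≠ a := by
              intro h
              rw [h] at hb
              exact (MvPolynomial.mem_support_iff.mp hb.1) hca'
            have hsub : (E.filter fun x => σ.le x b) ⊆ (E.filter fun x => σ.le x a) := by
              intro x hx
              rw [Finset.mem_filter] at hx ⊢
              exact ⟨hx.1, σ.le_trans _ _ _ hx.2 hblea⟩
            have haE : a ∈ E := hV f hfV hfa.1
            have hanot : a ∉ (E.filter fun x => σ.le x b) := by
              rw [Finset.mem_filter]
              rintro ⟨-, hle⟩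
              exact hbne (σ.le_antisymm _ _ hle hblea).symm
            have hlt : (E.filter fun x => σ.le x b).card < (E.filter fun x => σ.le x a).card := by
              apply Finset.card_lt_card
              rw [Finset.ssubset_iff_of_subset hsub]
              exact ⟨a, Finset.mem_filter.mpr ⟨haE, σ.le_refl a⟩, hanot⟩
            have hmem' : f' ∈ Submodule.span K (Set.range g) :=
              ih _ (lt_of_lt_of_le hlt hcard) f' hf'V b hb le_rfl
            rw [hfeq]
            exact Submodule.add_mem _ hmem' hgmem
      by_cases h0 : f = 0
      · rw [h0]; exact Submodule.zero_mem _
      · obtain ⟨a, ha⟩ := exists_leadingExp σ h0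
        exact key _ f hf a ha le_rfl
    · rw [Submodule.span_le]
      rintro _ ⟨a, rfl⟩
      exact hgV a
  rw [hspan, finrank_span_eq_card hli, Fintype.card_coe]

set_option maxHeartbeats 2000000 in
set_option synthInstance.maxHeartbeats 1000000 in
/-- for a homogeneous ideal `I` (w.r.t. the standard grading by total degree),
`P/I` and `P/LT_σ(I)` have the same Hilbert function. -/
theorem hilbert_function_of_leading_term_ideal {K : Type} [Field K] {n : ℕ}
    (σ : MonomialOrd (Fin n)) (I : Ideal (MvPolynomial (Fin n) K))
    (hI : ∀ f ∈ I, ∀ d : ℕ, MvPolynomial.homogeneousComponent d f ∈ I) :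
    ∀ d : ℕ,
      Module.finrank K
        (↥(MvPolynomial.homogeneousSubmodule (Fin n) K d) ⧸
          Submodule.comap (MvPolynomial.homogeneousSubmodule (Fin n) K d).subtype
            (Submodule.restrictScalars K I)) =
      Module.finrank K
        (↥(MvPolynomial.homogeneousSubmodule (Fin n) K d) ⧸
          Submodule.comap (MvPolynomial.homogeneousSubmodule (Fin n) K d).subtype
            (Submodule.restrictScalars K (ltIdeal σ I))) := by
  classical
  intro d
  set M := MvPolynomial.homogeneousSubmodule (Fin n) K d with hMdef
  -- the finite set of exponents of degree d
  set E : Finset (Fin n →₀ ℕ) := Finset.Iic (Finsupp.equivFunOnFinite.symm fun _ => d) with hEdef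
  have hdegE : ∀ a : Fin n →₀ ℕ, a.degree = d → a ∈ E := by
    intro a ha
    rw [hEdef, Finset.mem_Iic, Finsupp.le_def]
    intro i
    have h1 : a i ≤ a.degree := Finsupp.le_degree i a
    simp only [Finsupp.coe_equivFunOnFinite_symm]
    omega
  have hdeg_of_mem : ∀ (f : MvPolynomial (Fin n) K), f.IsHomogeneous d →
      ∀ a ∈ f.support, Finsupp.degree a = d := by
    intro f hf a ha
    have := hf (MvPolynomial.mem_support_iff.mp ha)
    rw [Finsupp.degree_eq_weight_one]; exact this
  have hsupp : ∀ f : MvPolynomial (Fin n) K, f.IsHomogeneous d → f.support ⊆ E := by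
    intro f hf a ha
    exact hdegE a (hdeg_of_mem f hf a ha)
  -- finite dimensionality of M
  have hMle : M ≤ Submodule.span K ((fun a => (monomial a (1 : K))) '' ↑E) := by
    intro f hf
    rw [show f = ∑ a ∈ f.support, monomial a (MvPolynomial.coeff a f) from
      (MvPolynomial.support_sum_monomial_coeff f).symm]
    apply Submodule.sum_mem
    intro a ha
    have h1 : (monomial a) (MvPolynomial.coeff a f) =
        (MvPolynomial.coeff a f) • (monomial a (1 : K)) := by
      rw [MvPolynomial.smul_monomial, smul_eq_mul, mul_one]
    rw [h1]
    exact Submodule.smul_mem _ _ (Submodule.subset_span ⟨a, hsupp f hf ha, rfl⟩)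
  haveI hMfd : FiniteDimensional K M := by
    haveI : FiniteDimensional K (Submodule.span K ((fun a => (monomial a (1 : K))) '' (↑E : Set (Fin n →₀ ℕ)))) :=
      FiniteDimensional.span_of_finite K ((E.finite_toSet).image (fun a => monomial a (1 : K)))
    exact Submodule.finiteDimensional_of_le hMle
  -- reduce to comparing dims of the degree-d pieces
  have hquot : ∀ J : Ideal (MvPolynomial (Fin n) K),
      Module.finrank K (↥M ⧸ Submodule.comap M.subtype (Submodule.restrictScalars K J))
        = Module.finrank K M
          - Module.finrank K ↥(Submodule.restrictScalars K J ⊓ M) := by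
    intro J
    have heq : Submodule.comap M.subtype (Submodule.restrictScalars K J)
        = Submodule.comap M.subtype (Submodule.restrictScalars K J ⊓ M) := by
      ext x
      simp only [Submodule.mem_comap, Submodule.mem_inf]
      exact ⟨fun h => ⟨h, x.2⟩, fun h => h.1⟩
    have e := Submodule.comapSubtypeEquivOfLe
      (inf_le_right : Submodule.restrictScalars K J ⊓ M ≤ M)
    rw [heq]
    have h2 := Submodule.finrank_quotient_add_finrank
      (Submodule.comap M.subtype (Submodule.restrictScalars K J ⊓ M))
    have h3 : Module.finrank K
          ↥(Submodule.comap M.subtype (Submodule.restrictScalars K J ⊓ M))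
        = Module.finrank K ↥(Submodule.restrictScalars K J ⊓ M) := e.finrank_eq
    omega
  rw [hquot I, hquot (ltIdeal σ I)]
  congr 1
  -- the common set of leading exponents
  set S : Finset (Fin n →₀ ℕ) := E.filter
    (fun a => ∃ f ∈ (Submodule.restrictScalars K I ⊓ M : Submodule K (MvPolynomial (Fin n) K)),
      IsLeadingExp σ f a) with hSdef
  have hmemVI : ∀ f : MvPolynomial (Fin n) K,
      f ∈ (Submodule.restrictScalars K I ⊓ M : Submodule K (MvPolynomial (Fin n) K)) ↔
      f ∈ I ∧ f.IsHomogeneous d := by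
    intro f
    rw [Submodule.mem_inf, Submodule.restrictScalars_mem, hMdef, mem_homogeneousSubmodule]
  have hVIsupp : ∀ f ∈ (Submodule.restrictScalars K I ⊓ M :
      Submodule K (MvPolynomial (Fin n) K)), f.support ⊆ E :=
    fun f hf => hsupp f ((hmemVI f).mp hf).2
  have hVLsupp : ∀ f ∈ (Submodule.restrictScalars K (ltIdeal σ I) ⊓ M :
      Submodule K (MvPolynomial (Fin n) K)), f.support ⊆ E :=
    fun f hf => hsupp f hf.2
  have hSI : ∀ a, a ∈ S ↔ ∃ f ∈ (Submodule.restrictScalars K I ⊓ M :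
      Submodule K (MvPolynomial (Fin n) K)), IsLeadingExp σ f a := by
    intro a
    rw [hSdef, Finset.mem_filter]
    constructor
    · exact fun h => h.2
    · rintro ⟨f, hf, hlf⟩
      exact ⟨hVIsupp f hf hlf.1, f, hf, hlf⟩
  -- ltIdeal as span of a monomial image
  have hset : { m | ∃ f ∈ I, ∃ a, IsLeadingExp σ f a ∧ m = monomial a (1 : K) }
      = (fun a => monomial a (1 : K)) '' {a | ∃ f ∈ I, IsLeadingExp σ f a} := by
    ext m
    constructor
    · rintro ⟨f, hf, a, hla, rfl⟩; exact ⟨a, ⟨f, hf, hla⟩, rfl⟩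
    · rintro ⟨a, ⟨f, hf, hla⟩, rfl⟩; exact ⟨f, hf, a, hla, rfl⟩
  have hSL : ∀ a, a ∈ S ↔ ∃ f ∈ (Submodule.restrictScalars K (ltIdeal σ I) ⊓ M :
      Submodule K (MvPolynomial (Fin n) K)), IsLeadingExp σ f a := by
    intro a
    rw [hSI a]
    constructor
    · -- from I-side witness to LT-side witness: the leading monomial itself
      rintro ⟨f, hf, hlf⟩
      obtain ⟨hfI, hfM⟩ := (hmemVI f).mp hf
      have hdega : Finsupp.degree a = d := hdeg_of_mem f hfM a hlf.1
      refine ⟨monomial a (1 : K), ?_, ?_⟩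
      · refine ⟨?_, ?_⟩
        · exact Ideal.subset_span ⟨f, hfI, a, hlf, rfl⟩
        · exact MvPolynomial.isHomogeneous_monomial _ hdega
      · constructor
        · rw [MvPolynomial.support_monomial]
          simp
        · intro b hb
          rw [MvPolynomial.support_monomial] at hb
          simp only [if_neg one_ne_zero, Finset.mem_singleton] at hb
          rw [hb]
          exact σ.le_refl a
    · -- from LT-side witness back to an honest element of I
      rintro ⟨f, ⟨hfLT, hfM⟩, hlf⟩
      have hdega : Finsupp.degree a = d := hdeg_of_mem f hfM a hlf.1
      have hfLT' : f ∈ Ideal.span ((fun a => monomial a (1 : K)) ''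
          {a | ∃ f ∈ I, IsLeadingExp σ f a}) := by
        rw [← hset]; exact hfLT
      obtain ⟨a₀, ⟨f₀, hf₀I, hf₀lead⟩, ha₀le⟩ :=
        MvPolynomial.mem_ideal_span_monomial_image.mp hfLT' a hlf.1
      -- homogeneous component of f₀ of degree (degree a₀)
      set g := MvPolynomial.homogeneousComponent (Finsupp.degree a₀) f₀ with hgdef
      have hgI : g ∈ I := hI f₀ hf₀I _
      have hga₀ : MvPolynomial.coeff a₀ g = MvPolynomial.coeff a₀ f₀ := by
        rw [hgdef, MvPolynomial.coeff_homogeneousComponent, if_pos rfl]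
      have hga₀ne : MvPolynomial.coeff a₀ g ≠ 0 := by
        rw [hga₀]
        exact MvPolynomial.mem_support_iff.mp hf₀lead.1
      have hgsupp : g.support ⊆ f₀.support := by
        intro b hb
        rw [MvPolynomial.mem_support_iff] at hb ⊢
        rw [hgdef, MvPolynomial.coeff_homogeneousComponent] at hb
        split at hb
        · exact hb
        · exact absurd rfl hb
      have hglead : IsLeadingExp σ g a₀ :=
        ⟨MvPolynomial.mem_support_iff.mpr hga₀ne, fun b hb => hf₀lead.2 b (hgsupp hb)⟩
      -- multiply by the cofactor monomial
      set b := a - a₀ with hbdef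
      have hab : a₀ + b = a := add_tsub_cancel_of_le ha₀le
      set h := monomial b (1 : K) * g with hhdef
      have hhI : h ∈ I := Ideal.mul_mem_left _ _ hgI
      have hcoeffh : MvPolynomial.coeff a h = MvPolynomial.coeff a₀ g := by
        rw [hhdef, ← show b + a₀ = a from by rw [add_comm]; exact hab,
          MvPolynomial.coeff_monomial_mul, one_mul]
      have hhsupp : ∀ m' ∈ h.support, σ.le m' a := by
        intro m' hm'
        rw [MvPolynomial.mem_support_iff, hhdef, MvPolynomial.coeff_monomial_mul'] at hm'
        split at hm'
        · rename_i hble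
          rw [one_mul] at hm'
          have hc : (m' - b) ∈ g.support := MvPolynomial.mem_support_iff.mpr hm'
          have h1 : σ.le (m' - b) a₀ := hglead.2 _ hc
          have h2 := σ.add_le_add _ _ b h1
          rw [tsub_add_cancel_of_le hble] at h2
          rw [← hab]
          exact h2
        · exact absurd rfl hm'
      have hhM : h.IsHomogeneous d := by
        have h1 : (monomial b (1 : K)).IsHomogeneous (Finsupp.degree b) :=
          MvPolynomial.isHomogeneous_monomial _ rfl
        have h2 : g.IsHomogeneous (Finsupp.degree a₀) :=
          MvPolynomial.homogeneousComponent_isHomogeneous _ _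
        have h3 := h1.mul h2
        have h4 : Finsupp.degree b + Finsupp.degree a₀ = d := by
          have : Finsupp.degree (a₀ + b) = d := by rw [hab]; exact hdega
          rw [Finsupp.degree_eq_weight_one] at this ⊢
          rw [map_add] at this
          omega
        rwa [h4] at h3
      exact ⟨h, ⟨hhI, hhM⟩,
        MvPolynomial.mem_support_iff.mpr (by rw [hcoeffh]; exact hga₀ne), hhsupp⟩
  rw [finrank_eq_card_lead σ E _ hVIsupp S hSI,
    finrank_eq_card_lead σ E _ hVLsupp S hSL]
end

section
/- (Elimination theorem) Let K be a field, let R = K[t₁,…,tₛ,x₁,…,xₙ], and let σ be an elimination order for the variables t₁,…,tₛ. Let I ⊆ R be an ideal and G a σ-Gröbner basis of I. Then the set G ∩ K[x₁,…,xₙ] of elements of G involving only the variables x₁,…,xₙ generates the elimination ideal I ∩ K[x₁,…,xₙ] as an ideal of K[x₁,…,xₙ], where K[x₁,…,xₙ] is regarded as a subring of R via the natural inclusion. -/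
open MvPolynomial

/-- `σ` is an elimination order for the first block of variables (the `t`-variables,
indexed by `Sum.inl`): any monomial in which some `t`-variable occurs is σ-greater than any
monomial involving only the `x`-variables. -/
def IsElimOrder {s n : ℕ} (σ : MonomialOrd (Fin s ⊕ Fin n)) : Prop :=
  ∀ u v : Fin s ⊕ Fin n →₀ ℕ,
    (∃ j : Fin s, 0 < u (Sum.inl j)) → (∀ j : Fin s, v (Sum.inl j) = 0) →
      σ.le v u ∧ v ≠ u

section Aux

namespace MonomialOrd

variable {ν : Type} (σ : MonomialOrd ν)

lemma le_of_pointwise (a b : ν →₀ ℕ) (h : a ≤ b) : σ.le a b := by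
  obtain ⟨c, rfl⟩ := exists_add_of_le h
  have h1 := σ.add_le_add 0 c a (σ.zero_le c)
  rw [zero_add] at h1
  rwa [add_comm a c]

lemma slt_trans {a b c : ν →₀ ℕ} (h1 : σ.le a b ∧ a ≠ b) (h2 : σ.le b c ∧ b ≠ c) :
    σ.le a c ∧ a ≠ c :=
  ⟨σ.le_trans _ _ _ h1.1 h2.1,
   fun h => h2.2 (σ.le_antisymm _ _ h2.1 (h ▸ h1.1))⟩

lemma exists_min [Finite ν] {W : Set (ν →₀ ℕ)} (hW : W.Nonempty) :
    ∃ a ∈ W, ∀ b ∈ W, ¬ (σ.le b a ∧ b ≠ a) := by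
  by_contra hcon
  push_neg at hcon
  have h' : ∀ p : W, ∃ q : W, σ.le q.1 p.1 ∧ q.1 ≠ p.1 := by
    intro p
    obtain ⟨b, hb, hlt⟩ := hcon p.1 p.2
    exact ⟨⟨b, hb⟩, hlt⟩
  choose next hnext using h'
  obtain ⟨a0, ha0⟩ := hW
  set f : ℕ → W := fun k => next^[k] ⟨a0, ha0⟩ with hf
  have hstep : ∀ k, σ.le (f (k+1)).1 (f k).1 ∧ (f (k+1)).1 ≠ (f k).1 := by
    intro k
    have he : f (k+1) = next (f k) := Function.iterate_succ_apply' next k _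
    rw [he]
    exact hnext (f k)
  have hchain : ∀ m k, σ.le (f (m + k + 1)).1 (f m).1 ∧ (f (m + k + 1)).1 ≠ (f m).1 := by
    intro m k
    induction k with
    | zero => simpa using hstep m
    | succ k ih =>
      have h2 := hstep (m + k + 1)
      have h3 : m + (k + 1) + 1 = (m + k + 1) + 1 := by omega
      rw [h3]
      exact σ.slt_trans h2 ih
  obtain ⟨m, k, hmk, hle⟩ := (Set.isPWO_of_wellQuasiOrderedLE W).exists_lt (f := fun k => (f k).1) (fun k => (f k).2)
  obtain ⟨j, rfl⟩ := Nat.exists_eq_add_of_lt hmk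
  have h1 := hchain m j
  have h2 := σ.le_of_pointwise _ _ hle
  exact h1.2 (σ.le_antisymm _ _ h1.1 h2)

lemma finset_max (s : Finset (ν →₀ ℕ)) : s.Nonempty → ∃ a ∈ s, ∀ b ∈ s, σ.le b a := by
  classical
  induction s using Finset.induction_on with
  | empty => intro h; simp at h
  | @insert x s hx ih =>
    intro _
    rcases s.eq_empty_or_nonempty with rfl | hs
    · exact ⟨x, by simp, by intro b hb; simp at hb; rw [hb]; exact σ.le_refl x⟩
    · obtain ⟨m, hm, hmax⟩ := ih hs
      rcases σ.le_total x m with h | h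
      · refine ⟨m, Finset.mem_insert_of_mem hm, ?_⟩
        intro b hb
        rcases Finset.mem_insert.mp hb with rfl | hb
        · exact h
        · exact hmax b hb
      · refine ⟨x, Finset.mem_insert_self _ _, ?_⟩
        intro b hb
        rcases Finset.mem_insert.mp hb with rfl | hb
        · exact σ.le_refl b
        · exact σ.le_trans _ _ _ (hmax b hb) h

lemma exists_leading {K : Type} [Field K] (f : MvPolynomial ν K) (hf : f ≠ 0) :
    ∃ a, IsLeadingExp σ f a := by
  have hne : f.support.Nonempty := by
    rw [Finset.nonempty_iff_ne_empty]
    intro h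
    exact hf (MvPolynomial.support_eq_empty.mp h)
  obtain ⟨a, ha, hmax⟩ := σ.finset_max f.support hne
  exact ⟨a, ha, hmax⟩

end MonomialOrd

end Aux

/-- elimination theorem: if `σ` is an elimination order for `t₁,…,tₛ` and `G`
is a σ-Gröbner basis of `I ⊆ K[t₁,…,tₛ,x₁,…,xₙ]`, then the elements of `G` lying in
`K[x₁,…,xₙ]` generate the elimination ideal `I ∩ K[x₁,…,xₙ]`, where `K[x₁,…,xₙ]` is embedded
in `R` via `rename Sum.inr`. -/
theorem elimination_theorem {K : Type} [Field K] {s n : ℕ}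
    (σ : MonomialOrd (Fin s ⊕ Fin n)) (hσ : IsElimOrder σ)
    (I : Ideal (MvPolynomial (Fin s ⊕ Fin n) K))
    (G : Finset (MvPolynomial (Fin s ⊕ Fin n) K)) (hG : IsGroebnerBasis σ I G) :
    Ideal.span { f : MvPolynomial (Fin n) K |
        MvPolynomial.rename (Sum.inr : Fin n → Fin s ⊕ Fin n) f ∈ G } =
      Ideal.comap (MvPolynomial.rename (Sum.inr : Fin n → Fin s ⊕ Fin n)).toRingHom I := by
  classical
  obtain ⟨hGI, hGlt⟩ := hG
  set S : Set (MvPolynomial (Fin n) K) :=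
    { f | MvPolynomial.rename (Sum.inr : Fin n → Fin s ⊕ Fin n) f ∈ G } with hS
  set J : Ideal (MvPolynomial (Fin s ⊕ Fin n) K) :=
    Ideal.span (MvPolynomial.rename (Sum.inr : Fin n → Fin s ⊕ Fin n) '' S) with hJ
  -- key claim : any element of I involving only x-variables lies in J
  have key : ∀ F : MvPolynomial (Fin s ⊕ Fin n) K, F ∈ I →
      (∀ u ∈ F.support, ∀ j : Fin s, u (Sum.inl j) = 0) → F ∈ J := by
    intro F0 hF0I hF0P
    by_contra hF0J
    have hF0ne : F0 ≠ 0 := fun h => hF0J (h ▸ J.zero_mem)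
    set W : Set ((Fin s ⊕ Fin n) →₀ ℕ) :=
      {a | ∃ F, F ∈ I ∧ (∀ u ∈ F.support, ∀ j : Fin s, u (Sum.inl j) = 0) ∧
        IsLeadingExp σ F a ∧ F ∉ J} with hW
    obtain ⟨a0, ha0⟩ := σ.exists_leading F0 hF0ne
    obtain ⟨a, haW, hmin⟩ :=
      σ.exists_min (W := W) ⟨a0, F0, hF0I, hF0P, ha0, hF0J⟩
    obtain ⟨F, hFI, hFP, hFlead, hFJ⟩ := haW
    -- the leading monomial of F belongs to LT(I), hence to the span of leading monomials of G
    have hmem : MvPolynomial.monomial a (1:K) ∈ ltIdeal σ I :=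
      Ideal.subset_span ⟨F, hFI, a, hFlead, rfl⟩
    rw [← hGlt] at hmem
    have hsetEq : {m | ∃ g ∈ G, ∃ b, IsLeadingExp σ g b ∧ m = MvPolynomial.monomial b (1:K)}
        = (fun b => MvPolynomial.monomial b (1:K)) '' {b | ∃ g ∈ G, IsLeadingExp σ g b} := by
      ext m
      constructor
      · rintro ⟨g, hg, b, hb, rfl⟩; exact ⟨b, ⟨g, hg, hb⟩, rfl⟩
      · rintro ⟨b, ⟨g, hg, hb⟩, rfl⟩; exact ⟨g, hg, b, hb, rfl⟩
    rw [hsetEq] at hmem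
    obtain ⟨b, hbB, hba⟩ := MvPolynomial.mem_ideal_span_monomial_image.mp hmem a (by
      rw [MvPolynomial.support_monomial, if_neg one_ne_zero]; exact Finset.mem_singleton_self a)
    obtain ⟨g, hgG, hglead⟩ := hbB
    have haX : ∀ j, a (Sum.inl j) = 0 := hFP a hFlead.1
    have hbX : ∀ j, b (Sum.inl j) = 0 := by
      intro j
      have h1 := (Finsupp.le_def.mp hba) (Sum.inl j)
      have h2 := haX j
      omega
    -- g involves only x-variables
    have hgP : ∀ u ∈ g.support, ∀ j : Fin s, u (Sum.inl j) = 0 := by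
      intro u hu j
      by_contra hne
      have hpos : 0 < u (Sum.inl j) := Nat.pos_of_ne_zero hne
      obtain ⟨hle, hneq⟩ := hσ u b ⟨j, hpos⟩ hbX
      exact hneq (σ.le_antisymm _ _ hle (hglead.2 u hu))
    have hd : MvPolynomial.coeff b g ≠ 0 := MvPolynomial.mem_support_iff.mp hglead.1
    have hc : MvPolynomial.coeff a F ≠ 0 := MvPolynomial.mem_support_iff.mp hFlead.1
    set q : MvPolynomial (Fin s ⊕ Fin n) K :=
      MvPolynomial.monomial (a - b) (MvPolynomial.coeff a F / MvPolynomial.coeff b g) with hq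
    set F' : MvPolynomial (Fin s ⊕ Fin n) K := F - q * g with hF'
    have hab : a - b + b = a := tsub_add_cancel_of_le hba
    have hqg : MvPolynomial.coeff a (q * g) = MvPolynomial.coeff a F := by
      have h1 : MvPolynomial.coeff (a - b + b)
          (MvPolynomial.monomial (a - b) (MvPolynomial.coeff a F / MvPolynomial.coeff b g) * g)
          = (MvPolynomial.coeff a F / MvPolynomial.coeff b g) * MvPolynomial.coeff b g :=
        MvPolynomial.coeff_monomial_mul _ _ _ _
      rw [hab] at h1
      rw [hq, h1, div_mul_cancel₀ _ hd]
    have hF'a : MvPolynomial.coeff a F' = 0 := by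
      rw [hF', MvPolynomial.coeff_sub, hqg, sub_self]
    -- every exponent of F' is strictly σ-smaller than a, and involves only x-variables
    have hsub : ∀ u ∈ F'.support,
        (σ.le u a ∧ u ≠ a) ∧ (∀ j : Fin s, u (Sum.inl j) = 0) := by
      intro u hu
      have hne : u ≠ a := by
        intro h
        exact (MvPolynomial.mem_support_iff.mp hu) (h ▸ hF'a)
      have hcase : u ∈ F.support ∨ u ∈ (q * g).support := by
        by_contra hcon
        push_neg at hcon
        have h1 := MvPolynomial.notMem_support_iff.mp hcon.1
        have h2 := MvPolynomial.notMem_support_iff.mp hcon.2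
        exact MvPolynomial.mem_support_iff.mp hu
          (by rw [hF', MvPolynomial.coeff_sub, h1, h2, sub_self])
      rcases hcase with h | h
      · exact ⟨⟨hFlead.2 u h, hne⟩, hFP u h⟩
      · have hmem2 := MvPolynomial.support_mul q g h
        rw [Finset.mem_add] at hmem2
        obtain ⟨y, hy, z, hz, rfl⟩ := hmem2
        have hyq : y = a - b := by
          rw [hq, MvPolynomial.support_monomial, if_neg (div_ne_zero hc hd)] at hy
          exact Finset.mem_singleton.mp hy
        subst hyq
        refine ⟨⟨?_, hne⟩, ?_⟩
        · have h1 := σ.add_le_add z b (a - b) (hglead.2 z hz)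
          rw [add_comm z (a - b), add_comm b (a - b), hab] at h1
          exact h1
        · intro j
          rw [Finsupp.add_apply, Finsupp.tsub_apply, haX j, hbX j, hgP z hz j]
    have hF'I : F' ∈ I := I.sub_mem hFI (I.mul_mem_left q (hGI hgG))
    have hgJ : g ∈ J := by
      have hvars : ↑g.vars ⊆ Set.range (Sum.inr : Fin n → Fin s ⊕ Fin n) := by
        intro i hi
        cases i with
        | inl j =>
          exfalso
          have hiv : Sum.inl j ∈ g.vars := Finset.mem_coe.mp hi
          rw [MvPolynomial.mem_vars] at hiv
          obtain ⟨u, hu, hju⟩ := hiv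
          exact (Finsupp.mem_support_iff.mp hju) (hgP u hu j)
        | inr i => exact ⟨i, rfl⟩
      obtain ⟨g', hg'⟩ :=
        MvPolynomial.exists_rename_eq_of_vars_subset_range g
          (Sum.inr : Fin n → Fin s ⊕ Fin n) Sum.inr_injective hvars
      refine Ideal.subset_span ⟨g', ?_, hg'⟩
      show MvPolynomial.rename (Sum.inr : Fin n → Fin s ⊕ Fin n) g' ∈ G
      rw [hg']
      exact hgG
    have hF'J : F' ∈ J := by
      by_cases h0 : F' = 0
      · rw [h0]; exact J.zero_mem
      · obtain ⟨a', ha'⟩ := σ.exists_leading F' h0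
        by_contra hJ'
        have haW' : a' ∈ W := ⟨F', hF'I, fun u hu j => (hsub u hu).2 j, ha', hJ'⟩
        exact hmin a' haW' ((hsub a' ha'.1).1)
    have hFJ2 : F ∈ J := by
      have hEq : F = F' + q * g := by rw [hF']; ring
      rw [hEq]
      exact J.add_mem hF'J (J.mul_mem_left q hgJ)
    exact hFJ hFJ2
  -- now prove the two inclusions
  apply le_antisymm
  · rw [Ideal.span_le]
    intro f hf
    exact Ideal.mem_comap.mpr (hGI hf)
  · intro f hf
    have hf' : MvPolynomial.rename (Sum.inr : Fin n → Fin s ⊕ Fin n) f ∈ I :=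
      Ideal.mem_comap.mp hf
    have hPF : ∀ u ∈ (MvPolynomial.rename (Sum.inr : Fin n → Fin s ⊕ Fin n) f).support,
        ∀ j : Fin s, u (Sum.inl j) = 0 := by
      intro u hu j
      rw [MvPolynomial.support_rename_of_injective Sum.inr_injective] at hu
      obtain ⟨v, hv, rfl⟩ := Finset.mem_image.mp hu
      refine Finsupp.mapDomain_notin_range _ _ ?_
      rintro ⟨i, hi⟩
      exact Sum.inr_ne_inl hi
    have hFJ := key _ hf' hPF
    set π : MvPolynomial (Fin s ⊕ Fin n) K →ₐ[K] MvPolynomial (Fin n) K :=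
      MvPolynomial.aeval (Sum.elim (fun _ : Fin s => (0 : MvPolynomial (Fin n) K))
        MvPolynomial.X) with hπdef
    have hπ : ∀ p : MvPolynomial (Fin n) K,
        π (MvPolynomial.rename (Sum.inr : Fin n → Fin s ⊕ Fin n) p) = p := by
      intro p
      rw [hπdef, MvPolynomial.aeval_rename, Sum.elim_comp_inr, MvPolynomial.aeval_X_left_apply]
    have hmap : π (MvPolynomial.rename (Sum.inr : Fin n → Fin s ⊕ Fin n) f)
        ∈ Ideal.map π J := Ideal.mem_map_of_mem _ hFJ
    rw [hπ] at hmap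
    rw [hJ, Ideal.map_span] at hmap
    have himg : π '' (MvPolynomial.rename (Sum.inr : Fin n → Fin s ⊕ Fin n) '' S) = S := by
      ext x
      constructor
      · rintro ⟨y, ⟨z, hz, rfl⟩, rfl⟩
        rw [hπ]
        exact hz
      · intro hx
        exact ⟨MvPolynomial.rename (Sum.inr : Fin n → Fin s ⊕ Fin n) x, ⟨x, hx, rfl⟩, hπ x⟩
    rwa [himg] at hmap
end

section
/- (Existence of a universal Gröbner basis) Let K be a field and I an ideal of P = K[x₁,…,xₙ]. There exists a finite subset G of I that is simultaneously a σ-Gröbner basis of I for every monomial order σ on P. -/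
open MvPolynomial

variable {n : ℕ}

theorem mo_le_of_le (σ : MonomialOrd (Fin n)) {a b : Fin n →₀ ℕ} (h : a ≤ b) : σ.le a b := by
  obtain ⟨c, rfl⟩ := le_iff_exists_add.mp h
  have := σ.add_le_add 0 c a (σ.zero_le c)
  simpa [add_comm] using this

theorem mo_wf (σ : MonomialOrd (Fin n)) :
    WellFounded (fun a b : Fin n →₀ ℕ => σ.le a b ∧ a ≠ b) := by
  set r := fun a b : Fin n →₀ ℕ => σ.le a b ∧ a ≠ b with hr
  haveI : IsIrrefl (Fin n →₀ ℕ) r := ⟨fun a h => h.2 rfl⟩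
  haveI : IsTrans (Fin n →₀ ℕ) r := ⟨fun a b c hab hbc =>
    ⟨σ.le_trans _ _ _ hab.1 hbc.1, fun h => hab.2 (σ.le_antisymm _ _ hab.1 (h ▸ hbc.1))⟩⟩
  haveI : IsStrictOrder (Fin n →₀ ℕ) r := ⟨⟩
  refine RelEmbedding.wellFounded_iff_isEmpty.mpr ⟨fun emb => ?_⟩
  obtain ⟨m, k, hmk, hle⟩ := Set.isPWO_of_wellQuasiOrderedLE (Set.univ : Set (Fin n →₀ ℕ)) (fun k => ⟨emb k, trivial⟩)
  have h1 : r (emb k) (emb m) := emb.map_rel_iff.mpr hmk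
  exact h1.2 (σ.le_antisymm _ _ h1.1 (mo_le_of_le σ hle))

theorem mo_exists_max (σ : MonomialOrd (Fin n)) (s : Finset (Fin n →₀ ℕ)) (hs : s.Nonempty) :
    ∃ a ∈ s, ∀ b ∈ s, σ.le b a := by
  induction hs using Finset.Nonempty.cons_induction with
  | singleton a => exact ⟨a, Finset.mem_singleton_self a, fun b hb => by
      rw [Finset.mem_singleton] at hb; exact hb ▸ σ.le_refl a⟩
  | cons a s ha hs' ih =>
    obtain ⟨m, hm, hmax⟩ := ih
    rcases σ.le_total a m with h | h
    · exact ⟨m, Finset.mem_cons_of_mem hm, fun b hb => by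
        rcases Finset.mem_cons.mp hb with rfl | hb
        · exact h
        · exact hmax b hb⟩
    · exact ⟨a, Finset.mem_cons_self a s, fun b hb => by
        rcases Finset.mem_cons.mp hb with rfl | hb
        · exact σ.le_refl b
        · exact σ.le_trans _ _ _ (hmax b hb) h⟩

variable {K : Type} [Field K] {n : ℕ}

/-- The "divisibility" ideal: polys all of whose exponents are ≥ some element of S. -/
def divIdeal (K : Type) [Field K] (n : ℕ) (S : Set (Fin n →₀ ℕ)) :
    Ideal (MvPolynomial (Fin n) K) where
  carrier := {f | ∀ b ∈ f.support, ∃ a ∈ S, a ≤ b}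
  add_mem' := by
    intro p q hp hq b hb
    rcases Finset.mem_union.mp (MvPolynomial.support_add hb) with h | h
    · exact hp b h
    · exact hq b h
  zero_mem' := by intro b hb; simp at hb
  smul_mem' := by
    intro c f hf b hb
    rw [smul_eq_mul] at hb
    obtain ⟨b₁, hb₁, b₂, hb₂, rfl⟩ := Finset.mem_add.mp (MvPolynomial.support_mul c f hb)
    obtain ⟨a, haS, hab⟩ := hf b₂ hb₂
    exact ⟨a, haS, hab.trans le_add_self⟩

theorem mem_mSpan {S : Set (Fin n →₀ ℕ)} {f : MvPolynomial (Fin n) K} :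
    f ∈ Ideal.span ((fun a => (monomial a (1 : K))) '' S) ↔
      ∀ b ∈ f.support, ∃ a ∈ S, a ≤ b := by
  constructor
  · intro hf
    have hle : Ideal.span ((fun a => (monomial a (1 : K))) '' S) ≤ divIdeal K n S := by
      rw [Ideal.span_le]
      rintro m ⟨a, haS, rfl⟩
      intro b hb
      classical
      rw [MvPolynomial.support_monomial] at hb
      simp only [one_ne_zero, if_false, Finset.mem_singleton] at hb
      exact ⟨a, haS, hb ▸ le_refl a⟩
    exact hle hf
  · intro h
    rw [MvPolynomial.as_sum f]
    refine Ideal.sum_mem _ fun b hb => ?_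
    obtain ⟨a, haS, hab⟩ := h b hb
    have : monomial b (coeff b f) = monomial (b - a) (coeff b f) * monomial a 1 := by
      rw [monomial_mul, mul_one, tsub_add_cancel_of_le hab]
    rw [this]
    exact Ideal.mul_mem_left _ _ (Ideal.subset_span ⟨a, haS, rfl⟩)
variable {K : Type} [Field K] {n : ℕ}

/-- The set of leading exponents of elements of `I`. -/
def LExps (σ : MonomialOrd (Fin n)) (I : Ideal (MvPolynomial (Fin n) K)) :
    Set (Fin n →₀ ℕ) :=
  {a | ∃ f ∈ I, IsLeadingExp σ f a}

/-- `b` lies in the monomial ideal generated by the leading exponents. -/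
def inU (σ : MonomialOrd (Fin n)) (I : Ideal (MvPolynomial (Fin n) K))
    (b : Fin n →₀ ℕ) : Prop :=
  ∃ a ∈ LExps σ I, a ≤ b

theorem ltIdeal_eq (σ : MonomialOrd (Fin n)) (I : Ideal (MvPolynomial (Fin n) K)) :
    ltIdeal σ I = Ideal.span ((fun a => (monomial a (1 : K))) '' LExps σ I) := by
  unfold ltIdeal
  congr 1
  ext m
  constructor
  · rintro ⟨f, hf, a, hla, rfl⟩; exact ⟨a, ⟨f, hf, hla⟩, rfl⟩
  · rintro ⟨a, ⟨f, hf, hla⟩, rfl⟩; exact ⟨f, hf, a, hla, rfl⟩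

theorem mem_ltIdeal {σ : MonomialOrd (Fin n)} {I : Ideal (MvPolynomial (Fin n) K)}
    {f : MvPolynomial (Fin n) K} :
    f ∈ ltIdeal σ I ↔ ∀ b ∈ f.support, inU σ I b := by
  rw [ltIdeal_eq, mem_mSpan]; rfl

theorem reduce_aux (σ : MonomialOrd (Fin n)) (I : Ideal (MvPolynomial (Fin n) K)) :
    ∀ b : Fin n →₀ ℕ, ∀ f : MvPolynomial (Fin n) K,
      (∀ d ∈ f.support, inU σ I d → σ.le d b) →
      ∃ h, f - h ∈ I ∧ ∀ d ∈ h.support, ¬ inU σ I d := by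
  classical
  intro b
  refine (mo_wf σ).induction
    (C := fun x => ∀ f : MvPolynomial (Fin n) K,
      (∀ d ∈ f.support, inU σ I d → σ.le d x) →
      ∃ h, f - h ∈ I ∧ ∀ d ∈ h.support, ¬ inU σ I d) b ?_
  intro x IH f hf
  rcases (f.support.filter (fun d => inU σ I d)).eq_empty_or_nonempty with hs | hs
  · refine ⟨f, by simp [I.zero_mem], fun d hd hUd => ?_⟩
    have : d ∈ f.support.filter (fun d => inU σ I d) := Finset.mem_filter.mpr ⟨hd, hUd⟩
    rw [hs] at this; simp at this
  · obtain ⟨b₀, hb₀s, hmax⟩ := mo_exists_max σ _ hs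
    obtain ⟨hb₀f, hUb₀⟩ := Finset.mem_filter.mp hb₀s
    obtain ⟨a, ⟨g, hgI, hga⟩, hab₀⟩ := hUb₀
    have hca : (b₀ - a) + a = b₀ := tsub_add_cancel_of_le hab₀
    set c := b₀ - a with hc
    set r : K := coeff b₀ f / coeff a g with hrdef
    set f' := f - monomial c r * g with hf'def
    have hff' : f - f' ∈ I := by
      rw [hf'def, sub_sub_cancel]
      exact Ideal.mul_mem_left _ _ hgI
    have hga0 : coeff a g ≠ 0 := mem_support_iff.mp hga.1
    have hb₀0 : coeff b₀ f' = 0 := by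
      rw [hf'def, coeff_sub, ← hca, coeff_monomial_mul, hrdef, hca,
        div_mul_cancel₀ _ hga0, sub_self]
    have hkey : ∀ d ∈ f'.support, inU σ I d → (σ.le d b₀ ∧ d ≠ b₀) := by
      intro d hd hUd
      have hdb₀ : d ≠ b₀ := by
        intro h; rw [h] at hd; exact (mem_support_iff.mp hd) hb₀0
      refine ⟨?_, hdb₀⟩
      rcases Finset.mem_union.mp (MvPolynomial.support_sub _ f (monomial c r * g) hd)
        with h | h
      · exact hmax d (Finset.mem_filter.mpr ⟨h, hUd⟩)
      · obtain ⟨b₁, hb₁, b₂, hb₂, rfl⟩ := Finset.mem_add.mp (MvPolynomial.support_mul _ _ h)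
        have hb₁c : b₁ = c := Finset.mem_singleton.mp (support_monomial_subset hb₁)
        have : σ.le (b₂ + c) (a + c) := σ.add_le_add b₂ a c (hga.2 b₂ hb₂)
        rw [add_comm b₂ c, add_comm a c, hca] at this
        rwa [hb₁c]
    rcases (f'.support.filter (fun d => inU σ I d)).eq_empty_or_nonempty with hs' | hs'
    · refine ⟨f', hff', fun d hd hUd => ?_⟩
      have : d ∈ f'.support.filter (fun d => inU σ I d) := Finset.mem_filter.mpr ⟨hd, hUd⟩
      rw [hs'] at this; simp at this
    · obtain ⟨b₁, hb₁s', hmax'⟩ := mo_exists_max σ _ hs'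
      obtain ⟨hb₁f', hUb₁⟩ := Finset.mem_filter.mp hb₁s'
      obtain ⟨hb₁b₀, hb₁ne⟩ := hkey b₁ hb₁f' hUb₁
      have hb₀x : σ.le b₀ x := hf b₀ hb₀f ⟨a, ⟨g, hgI, hga⟩, hab₀⟩
      have hb₁x : σ.le b₁ x ∧ b₁ ≠ x := by
        refine ⟨σ.le_trans _ _ _ hb₁b₀ hb₀x, fun h => ?_⟩
        subst h
        exact hb₁ne (σ.le_antisymm _ _ hb₀x hb₁b₀).symm
      obtain ⟨h, hI2, hstd⟩ := IH b₁ hb₁x f'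
        (fun d hd hUd => hmax' d (Finset.mem_filter.mpr ⟨hd, hUd⟩))
      refine ⟨h, ?_, hstd⟩
      have := I.add_mem hff' hI2
      rwa [sub_add_sub_cancel] at this

theorem reduce (σ : MonomialOrd (Fin n)) (I : Ideal (MvPolynomial (Fin n) K))
    (f : MvPolynomial (Fin n) K) :
    ∃ h, f - h ∈ I ∧ ∀ d ∈ h.support, ¬ inU σ I d := by
  classical
  rcases (f.support.filter (fun d => inU σ I d)).eq_empty_or_nonempty with hs | hs
  · refine ⟨f, by simp [I.zero_mem], fun d hd hUd => ?_⟩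
    have : d ∈ f.support.filter (fun d => inU σ I d) := Finset.mem_filter.mpr ⟨hd, hUd⟩
    rw [hs] at this; simp at this
  · obtain ⟨b, hbs, hmax⟩ := mo_exists_max σ _ hs
    exact reduce_aux σ I b f (fun d hd hUd => hmax d (Finset.mem_filter.mpr ⟨hd, hUd⟩))

theorem indep (σ : MonomialOrd (Fin n)) (I : Ideal (MvPolynomial (Fin n) K))
    {f : MvPolynomial (Fin n) K} (hfI : f ∈ I)
    (hstd : ∀ d ∈ f.support, ¬ inU σ I d) : f = 0 := by
  by_contra hf0
  have hne : f.support.Nonempty := by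
    rwa [Finset.nonempty_iff_ne_empty, ne_eq, MvPolynomial.support_eq_empty]
  obtain ⟨a, ha, hamax⟩ := mo_exists_max σ _ hne
  exact hstd a ha ⟨a, ⟨f, hfI, ha, hamax⟩, le_refl a⟩

/-- The key dichotomy: the monomial sets generated by leading exponents w.r.t. two
monomial orders are never strictly comparable. -/
theorem inU_antisymm (σ τ : MonomialOrd (Fin n)) (I : Ideal (MvPolynomial (Fin n) K))
    (hyp : ∀ b, inU τ I b → inU σ I b) : ∀ b, inU σ I b → inU τ I b := by
  intro b hbσ
  by_contra hbτ
  obtain ⟨h, hI, hstd⟩ := reduce σ I (monomial b (1 : K))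
  have hstdτ : ∀ d ∈ (monomial b (1 : K) - h).support, ¬ inU τ I d := by
    intro d hd
    classical
    rcases Finset.mem_union.mp (MvPolynomial.support_sub _ _ _ hd) with h1 | h1
    · rw [MvPolynomial.support_monomial] at h1
      simp only [one_ne_zero, if_false, Finset.mem_singleton] at h1
      subst h1
      exact hbτ
    · exact fun hU => hstd d h1 (hyp d hU)
  have heq : monomial b (1 : K) - h = 0 := indep τ I hI hstdτ
  have hbh : b ∈ h.support := by
    rw [sub_eq_zero] at heq
    rw [← heq, mem_support_iff, coeff_monomial]
    simp
  exact hstd b hbh hbσ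

theorem leadexp_unique {σ : MonomialOrd (Fin n)} {g : MvPolynomial (Fin n) K}
    {a a' : Fin n →₀ ℕ} (h : IsLeadingExp σ g a) (h' : IsLeadingExp σ g a') : a = a' :=
  σ.le_antisymm _ _ (h'.2 a h.1) (h.2 a' h'.1)

theorem upEq_of_spanEq {S₁ S₂ : Set (Fin n →₀ ℕ)}
    (h : Ideal.span ((fun a => (monomial a (1 : K))) '' S₁) =
      Ideal.span ((fun a => (monomial a (1 : K))) '' S₂)) :
    ∀ b, (∃ a ∈ S₁, a ≤ b) ↔ ∃ a ∈ S₂, a ≤ b := by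
  classical
  intro b
  have hsupp : (monomial b (1 : K)).support = {b} := by
    rw [MvPolynomial.support_monomial]; simp
  have h₁ := @mem_mSpan K _ n S₁ (monomial b (1 : K))
  have h₂ := @mem_mSpan K _ n S₂ (monomial b (1 : K))
  rw [hsupp] at h₁ h₂
  simp only [Finset.mem_singleton, forall_eq] at h₁ h₂
  rw [← h₁, ← h₂, h]

theorem spanEq_of_upEq {S₁ S₂ : Set (Fin n →₀ ℕ)}
    (h : ∀ b, (∃ a ∈ S₁, a ≤ b) ↔ ∃ a ∈ S₂, a ≤ b) :
    Ideal.span ((fun a => (monomial a (1 : K))) '' S₁) =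
      Ideal.span ((fun a => (monomial a (1 : K))) '' S₂) := by
  ext f
  rw [mem_mSpan, mem_mSpan]
  exact ⟨fun hf b hb => (h b).mp (hf b hb), fun hf b hb => (h b).mpr (hf b hb)⟩

/-- From any set of exponents one can select a finite subset generating the same
monomial ideal (Noetherianity). -/
theorem exists_finset_span (S : Set (Fin n →₀ ℕ)) :
    ∃ A : Finset (Fin n →₀ ℕ), ↑A ⊆ S ∧
      Ideal.span ((fun a => (monomial a (1 : K))) '' ↑A) =
        Ideal.span ((fun a => (monomial a (1 : K))) '' S) := by
  classical
  set J := Ideal.span ((fun a => (monomial a (1 : K))) '' S) with hJ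
  obtain ⟨Q, hQ⟩ := IsNoetherian.noetherian J
  have hmem : ∀ q ∈ Q, ∃ t : Finset (MvPolynomial (Fin n) K),
      ↑t ⊆ (fun a => (monomial a (1 : K))) '' S ∧ q ∈ Ideal.span (↑t : Set _) := by
    intro q hq
    have : q ∈ J := hQ ▸ Ideal.subset_span hq
    exact Submodule.mem_span_finite_of_mem_span this
  choose t ht₁ ht₂ using hmem
  set T : Finset (MvPolynomial (Fin n) K) := Q.attach.biUnion (fun q => t q.1 q.2) with hT
  have hTsub : (↑T : Set (MvPolynomial (Fin n) K)) ⊆ (fun a => (monomial a (1 : K))) '' S := by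
    intro m hm
    simp only [hT, Finset.coe_biUnion, Finset.mem_coe, Finset.mem_attach, Set.iUnion_true,
      Set.mem_iUnion] at hm
    obtain ⟨q, hq⟩ := hm
    exact ht₁ q.1 q.2 hq
  have hmemT : ∀ m ∈ T, ∃ a ∈ S, m = monomial a (1 : K) := by
    intro m hm
    obtain ⟨a, haS, rfl⟩ := hTsub hm
    exact ⟨a, haS, rfl⟩
  choose aOf haOf₁ haOf₂ using hmemT
  refine ⟨T.attach.image (fun m => aOf m.1 m.2), ?_, ?_⟩
  · intro a ha
    simp only [Finset.coe_image, Set.mem_image, Finset.mem_coe, Finset.mem_attach] at ha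
    obtain ⟨m, _, rfl⟩ := ha
    exact haOf₁ m.1 m.2
  · refine le_antisymm (Ideal.span_mono ?_) ?_
    · rintro m ⟨a, ha, rfl⟩
      simp only [Finset.coe_image, Set.mem_image, Finset.mem_coe, Finset.mem_attach,
        true_and] at ha
      obtain ⟨q, rfl⟩ := ha
      exact ⟨aOf q.1 q.2, haOf₁ q.1 q.2, rfl⟩
    · rw [← hQ]
      refine Ideal.span_le.mpr (fun q hq => ?_)
      have hsub : (↑(t q hq) : Set (MvPolynomial (Fin n) K)) ⊆
          (fun a => (monomial a (1 : K))) ''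
            ↑(T.attach.image (fun m => aOf m.1 m.2)) := by
        intro m hm
        have hmT : m ∈ T := Finset.mem_biUnion.mpr ⟨⟨q, hq⟩, Finset.mem_attach _ _, hm⟩
        refine ⟨aOf m hmT, ?_, (haOf₂ m hmT).symm⟩
        exact Finset.mem_coe.mpr (Finset.mem_image.mpr ⟨⟨m, hmT⟩, Finset.mem_attach _ _, rfl⟩)
      exact Ideal.span_mono hsub (ht₂ q hq)

/-- Superset of a Gröbner basis inside `I` is again a Gröbner basis. -/
theorem gb_superset {τ : MonomialOrd (Fin n)} {I : Ideal (MvPolynomial (Fin n) K)}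
    {G G' : Finset (MvPolynomial (Fin n) K)} (hGG' : G ⊆ G')
    (hG : IsGroebnerBasis τ I G) (hG' : ↑G' ⊆ (I : Set (MvPolynomial (Fin n) K))) :
    IsGroebnerBasis τ I G' := by
  refine ⟨hG', le_antisymm ?_ ?_⟩
  · refine Ideal.span_le.mpr ?_
    rintro m ⟨g, hg, a, hla, rfl⟩
    exact Ideal.subset_span ⟨g, hG' hg, a, hla, rfl⟩
  · rw [← hG.2]
    refine Ideal.span_mono ?_
    rintro m ⟨g, hg, a, hla, rfl⟩
    exact ⟨g, hGG' hg, a, hla, rfl⟩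

/-- The per-order package: a finite Gröbner basis together with chosen leading exponents,
which remains a Gröbner basis for any monomial order selecting the same leading exponents. -/
theorem pkg (σ : MonomialOrd (Fin n)) (I : Ideal (MvPolynomial (Fin n) K)) :
    ∃ (G : Finset (MvPolynomial (Fin n) K)) (w : MvPolynomial (Fin n) K → (Fin n →₀ ℕ)),
      ↑G ⊆ (I : Set (MvPolynomial (Fin n) K)) ∧
      (∀ g ∈ G, IsLeadingExp σ g (w g)) ∧
      (∀ τ : MonomialOrd (Fin n), (∀ g ∈ G, IsLeadingExp τ g (w g)) →
        IsGroebnerBasis τ I G) := by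
  classical
  obtain ⟨A, hAS, hspan⟩ := @exists_finset_span K _ n (LExps σ I)
  have hA : ∀ a ∈ A, ∃ f, f ∈ I ∧ IsLeadingExp σ f a := by
    intro a ha
    obtain ⟨f, hfI, hlf⟩ := hAS ha
    exact ⟨f, hfI, hlf⟩
  choose pick hpickI hpickL using hA
  set G : Finset (MvPolynomial (Fin n) K) := A.attach.image (fun a => pick a.1 a.2) with hG
  set w : MvPolynomial (Fin n) K → (Fin n →₀ ℕ) := fun g =>
    if hg : ∃ a, IsLeadingExp σ g a then hg.choose else 0 with hw
  have hGmem : ∀ g ∈ G, ∃ (a : Fin n →₀ ℕ) (ha : a ∈ A), g = pick a ha := by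
    intro g hg
    simp only [hG, Finset.mem_image, Finset.mem_attach, true_and] at hg
    obtain ⟨a, rfl⟩ := hg
    exact ⟨a.1, a.2, rfl⟩
  have hGI : ↑G ⊆ (I : Set (MvPolynomial (Fin n) K)) := by
    intro g hg
    obtain ⟨a, ha, rfl⟩ := hGmem g (Finset.mem_coe.mp hg)
    exact hpickI a ha
  have hwG : ∀ g ∈ G, IsLeadingExp σ g (w g) := by
    intro g hg
    obtain ⟨a, ha, rfl⟩ := hGmem g hg
    have hex : ∃ a', IsLeadingExp σ (pick a ha) a' := ⟨a, hpickL a ha⟩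
    rw [hw]; simp only [hex, dif_pos]
    exact hex.choose_spec
  have hwA : ∀ g ∈ G, w g ∈ A := by
    intro g hg
    obtain ⟨a, ha, rfl⟩ := hGmem g hg
    rwa [leadexp_unique (hwG _ hg) (hpickL a ha)]
  have hAw : ∀ a ∈ A, ∃ g ∈ G, w g = a := by
    intro a ha
    refine ⟨pick a ha, ?_, ?_⟩
    · exact Finset.mem_image.mpr ⟨⟨a, ha⟩, Finset.mem_attach _ _, rfl⟩
    · exact leadexp_unique (hwG _ (Finset.mem_image.mpr ⟨⟨a, ha⟩, Finset.mem_attach _ _, rfl⟩))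
        (hpickL a ha)
  refine ⟨G, w, hGI, hwG, ?_⟩
  intro τ hτ
  refine ⟨hGI, ?_⟩
  -- the set of τ-leading monomials of G is the image of A
  have hset : { m | ∃ g ∈ G, ∃ a, IsLeadingExp τ g a ∧ m = monomial a (1 : K) } =
      (fun a => (monomial a (1 : K))) '' ↑A := by
    ext m
    constructor
    · rintro ⟨g, hg, a, hla, rfl⟩
      have : a = w g := leadexp_unique hla (hτ g hg)
      exact ⟨a, this ▸ hwA g hg, rfl⟩
    · rintro ⟨a, haA, rfl⟩
      obtain ⟨g, hg, hwg⟩ := hAw a haA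
      exact ⟨g, hg, a, hwg ▸ hτ g hg, rfl⟩
  rw [hset, ltIdeal_eq]
  -- now compare the up-closures
  have h1 : ∀ b, inU σ I b ↔ ∃ a ∈ (↑A : Set (Fin n →₀ ℕ)), a ≤ b :=
    fun b => (upEq_of_spanEq hspan.symm b)
  have h2 : ∀ b, (∃ a ∈ (↑A : Set (Fin n →₀ ℕ)), a ≤ b) → inU τ I b := by
    rintro b ⟨a, haA, hab⟩
    obtain ⟨g, hg, hwg⟩ := hAw a haA
    exact ⟨a, ⟨g, hGI hg, hwg ▸ hτ g hg⟩, hab⟩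
  have h3 : ∀ b, inU τ I b → inU σ I b :=
    inU_antisymm τ σ I (fun b hb => h2 b ((h1 b).mp hb))
  refine spanEq_of_upEq (fun b => ?_)
  constructor
  · intro hb
    exact h2 b hb
  · intro hb
    exact (h1 b).mp (h3 b hb)

/-- The space in which monomial orders live: Boolean functions on pairs of exponents. -/
abbrev OrdFun (n : ℕ) := ((Fin n →₀ ℕ) × (Fin n →₀ ℕ)) → Bool

/-- The subset of functions satisfying the monomial-order axioms. -/
def OrdSet (n : ℕ) : Set (OrdFun n) :=
  {F | (∀ a, F (a, a) = true) ∧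
       (∀ a b c, F (a, b) = true → F (b, c) = true → F (a, c) = true) ∧
       (∀ a b, F (a, b) = true → F (b, a) = true → a = b) ∧
       (∀ a b, F (a, b) = true ∨ F (b, a) = true) ∧
       (∀ a b c, F (a, b) = true → F (a + c, b + c) = true) ∧
       (∀ a, F (0, a) = true)}

/-- The monomial order determined by an element of `OrdSet`. -/
def ordOf {n : ℕ} (F : OrdFun n) (hF : F ∈ OrdSet n) : MonomialOrd (Fin n) :=
  ⟨fun a b => F (a, b) = true, hF.1, hF.2.1, hF.2.2.1, hF.2.2.2.1,
    fun a b c h => hF.2.2.2.2.1 a b c h, hF.2.2.2.2.2⟩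

theorem isClosed_coord {n : ℕ} (p : (Fin n →₀ ℕ) × (Fin n →₀ ℕ)) (v : Bool) :
    IsClosed {F : OrdFun n | F p = v} := by
  have : {F : OrdFun n | F p = v} = (fun F : OrdFun n => F p) ⁻¹' {v} := by
    ext F; simp
  rw [this]
  exact (isClosed_discrete {v}).preimage (continuous_apply p)

theorem isOpen_coord {n : ℕ} (p : (Fin n →₀ ℕ) × (Fin n →₀ ℕ)) (v : Bool) :
    IsOpen {F : OrdFun n | F p = v} := by
  have : {F : OrdFun n | F p = v} = (fun F : OrdFun n => F p) ⁻¹' {v} := by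
    ext F; simp
  rw [this]
  exact (isOpen_discrete {v}).preimage (continuous_apply p)

theorem isClosed_imp' {X : Type*} [TopologicalSpace X] {s t : Set X}
    (hs : IsOpen s) (ht : IsClosed t) : IsClosed {x | x ∈ s → x ∈ t} := by
  have : {x | x ∈ s → x ∈ t} = sᶜ ∪ t := by
    ext x; simp [imp_iff_not_or]
  rw [this]
  exact hs.isClosed_compl.union ht

theorem isClosed_OrdSet (n : ℕ) : IsClosed (OrdSet n) := by
  have h1 : IsClosed {F : OrdFun n | ∀ a, F (a, a) = true} := by
    rw [Set.setOf_forall]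
    exact isClosed_iInter (fun a => isClosed_coord _ _)
  have h2 : IsClosed {F : OrdFun n |
      ∀ a b c, F (a, b) = true → F (b, c) = true → F (a, c) = true} := by
    rw [Set.setOf_forall]
    refine isClosed_iInter (fun a => ?_)
    rw [Set.setOf_forall]
    refine isClosed_iInter (fun b => ?_)
    rw [Set.setOf_forall]
    refine isClosed_iInter (fun c => ?_)
    exact isClosed_imp' (isOpen_coord _ _) (isClosed_imp' (isOpen_coord _ _) (isClosed_coord _ _))
  have h3 : IsClosed {F : OrdFun n | ∀ a b, F (a, b) = true → F (b, a) = true → a = b} := by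
    rw [Set.setOf_forall]
    refine isClosed_iInter (fun a => ?_)
    rw [Set.setOf_forall]
    refine isClosed_iInter (fun b => ?_)
    refine isClosed_imp' (isOpen_coord _ _) (isClosed_imp' (isOpen_coord _ _) ?_)
    by_cases hab : a = b
    · simp only [hab, Set.setOf_true]
      exact isClosed_univ
    · simp only [hab, Set.setOf_false]
      exact isClosed_empty
  have h4 : IsClosed {F : OrdFun n | ∀ a b, F (a, b) = true ∨ F (b, a) = true} := by
    rw [Set.setOf_forall]
    refine isClosed_iInter (fun a => ?_)
    rw [Set.setOf_forall]
    refine isClosed_iInter (fun b => ?_)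
    have : {F : OrdFun n | F (a, b) = true ∨ F (b, a) = true} =
        {F : OrdFun n | F (a, b) = true} ∪ {F : OrdFun n | F (b, a) = true} := rfl
    rw [this]
    exact (isClosed_coord _ _).union (isClosed_coord _ _)
  have h5 : IsClosed {F : OrdFun n | ∀ a b c, F (a, b) = true → F (a + c, b + c) = true} := by
    rw [Set.setOf_forall]
    refine isClosed_iInter (fun a => ?_)
    rw [Set.setOf_forall]
    refine isClosed_iInter (fun b => ?_)
    rw [Set.setOf_forall]
    refine isClosed_iInter (fun c => ?_)
    exact isClosed_imp' (isOpen_coord _ _) (isClosed_coord _ _)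
  have h6 : IsClosed {F : OrdFun n | ∀ a, F (0, a) = true} := by
    rw [Set.setOf_forall]
    exact isClosed_iInter (fun a => isClosed_coord _ _)
  have : OrdSet n = {F : OrdFun n | ∀ a, F (a, a) = true} ∩
      ({F : OrdFun n | ∀ a b c, F (a, b) = true → F (b, c) = true → F (a, c) = true} ∩
      ({F : OrdFun n | ∀ a b, F (a, b) = true → F (b, a) = true → a = b} ∩
      ({F : OrdFun n | ∀ a b, F (a, b) = true ∨ F (b, a) = true} ∩
      ({F : OrdFun n | ∀ a b c, F (a, b) = true → F (a + c, b + c) = true} ∩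
      {F : OrdFun n | ∀ a, F (0, a) = true})))) := rfl
  rw [this]
  exact h1.inter (h2.inter (h3.inter (h4.inter (h5.inter h6))))

/-- existence of a universal Gröbner basis: a finite subset of `I` which is a
σ-Gröbner basis of `I` simultaneously for all monomial orders `σ`. -/
theorem exists_universal_groebner_basis {K : Type} [Field K] {n : ℕ}
    (I : Ideal (MvPolynomial (Fin n) K)) :
    ∃ G : Finset (MvPolynomial (Fin n) K),
      ∀ σ : MonomialOrd (Fin n), IsGroebnerBasis σ I G := by
  classical
  have hpkg : ∀ (F : OrdFun n) (hF : F ∈ OrdSet n),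
      ∃ (G : Finset (MvPolynomial (Fin n) K)) (w : MvPolynomial (Fin n) K → (Fin n →₀ ℕ)),
        ↑G ⊆ (I : Set (MvPolynomial (Fin n) K)) ∧
        (∀ g ∈ G, IsLeadingExp (ordOf F hF) g (w g)) ∧
        (∀ τ : MonomialOrd (Fin n), (∀ g ∈ G, IsLeadingExp τ g (w g)) →
          IsGroebnerBasis τ I G) :=
    fun F hF => pkg (ordOf F hF) I
  choose G w hGI hwlead hmain using hpkg
  set U : ↥(OrdSet n) → Set (OrdFun n) := fun x =>
    {F' | ∀ g ∈ G x.1 x.2, ∀ b ∈ g.support, F' (b, w x.1 x.2 g) = true} with hU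
  have hUopen : ∀ x, IsOpen (U x) := by
    intro x
    have : U x = ⋂ g ∈ G x.1 x.2, ⋂ b ∈ g.support,
        {F' : OrdFun n | F' (b, w x.1 x.2 g) = true} := by
      ext F'
      simp [hU, Set.mem_iInter]
    rw [this]
    exact isOpen_biInter_finset (fun g _ =>
      isOpen_biInter_finset (fun b _ => isOpen_coord _ _))
  have hcover : OrdSet n ⊆ ⋃ x : ↥(OrdSet n), U x := by
    intro F hF
    refine Set.mem_iUnion.mpr ⟨⟨F, hF⟩, ?_⟩
    intro g hg b hb
    exact (hwlead F hF g hg).2 b hb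
  have hcompact : IsCompact (OrdSet n) := (isClosed_OrdSet n).isCompact
  obtain ⟨t, ht⟩ := hcompact.elim_finite_subcover U hUopen hcover
  refine ⟨t.biUnion (fun x => G x.1 x.2), fun τ => ?_⟩
  set F : OrdFun n := fun p => decide (τ.le p.1 p.2) with hFdef
  have hFval : ∀ a b, F (a, b) = true ↔ τ.le a b := by
    intro a b
    rw [hFdef]
    exact decide_eq_true_iff
  have hF : F ∈ OrdSet n := by
    refine ⟨fun a => (hFval a a).mpr (τ.le_refl a),
      fun a b c h1 h2 => (hFval a c).mpr (τ.le_trans a b c ((hFval a b).mp h1) ((hFval b c).mp h2)),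
      fun a b h1 h2 => τ.le_antisymm a b ((hFval a b).mp h1) ((hFval b a).mp h2),
      fun a b => ?_,
      fun a b c h => (hFval _ _).mpr (τ.add_le_add a b c ((hFval a b).mp h)),
      fun a => (hFval 0 a).mpr (τ.zero_le a)⟩
    rcases τ.le_total a b with h | h
    · exact Or.inl ((hFval a b).mpr h)
    · exact Or.inr ((hFval b a).mpr h)
  obtain ⟨x, hxt, hxF⟩ : ∃ x ∈ t, F ∈ U x := by
    have := ht hF
    simpa using this
  have hτlead : ∀ g ∈ G x.1 x.2, IsLeadingExp τ g (w x.1 x.2 g) := by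
    intro g hg
    exact ⟨(hwlead x.1 x.2 g hg).1, fun b hb => (hFval b _).mp (hxF g hg b hb)⟩
  have hGB := hmain x.1 x.2 τ hτlead
  refine gb_superset (Finset.subset_biUnion_of_mem (fun x => G x.1 x.2) hxt) hGB ?_
  intro g hg
  obtain ⟨y, hyt, hy⟩ := Finset.mem_biUnion.mp (Finset.mem_coe.mp hg)
  exact hGI y.1 y.2 hy
end

section
/- (Uniqueness of the reduced Gröbner basis) Let K be a field, σ a monomial order on P = K[x₁,…,xₙ], and I ⊆ P a nonzero ideal. Then I has exactly one reduced σ-Gröbner basis, i.e. there is a unique finite subset G of I such that: G is a σ-Gröbner basis of I; every element of G has σ-leading coefficient 1; and for each g ∈ G, no monomial occurring in g is divisible by the σ-leading monomial of any element of G \ {g}. -/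
open MvPolynomial

namespace RGB

variable {n : ℕ} (σ : MonomialOrd (Fin n))

def slt (a b : Fin n →₀ ℕ) : Prop := σ.le a b ∧ a ≠ b

theorem le_of_dvd {a b : Fin n →₀ ℕ} (h : a ≤ b) : σ.le a b := by
  have := σ.add_le_add 0 (b - a) a (σ.zero_le (b - a))
  rwa [zero_add, tsub_add_cancel_of_le h] at this

theorem slt_wf : WellFounded (slt σ) := by
  haveI : IsIrrefl (Fin n →₀ ℕ) (slt σ) := ⟨fun a h => h.2 rfl⟩
  haveI : IsTrans (Fin n →₀ ℕ) (slt σ) := ⟨fun a b c h1 h2 =>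
    ⟨σ.le_trans _ _ _ h1.1 h2.1,
     fun he => h1.2 (σ.le_antisymm _ _ h1.1 (by rw [he]; exact h2.1))⟩⟩
  haveI : IsStrictOrder (Fin n →₀ ℕ) (slt σ) := ⟨⟩
  rw [RelEmbedding.wellFounded_iff_isEmpty]
  constructor
  intro f
  obtain ⟨m, k, hmk, hle⟩ := (Set.partiallyWellOrderedOn_iff_exists_lt.1 (Set.isPWO_of_wellQuasiOrderedLE (Set.univ : Set (Fin n →₀ ℕ)))) f (fun _ => trivial)
  have h1 : slt σ (f k) (f m) := f.map_rel_iff.2 hmk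
  exact h1.2 (σ.le_antisymm _ _ h1.1 (le_of_dvd σ hle))

theorem max_exists (s : Finset (Fin n →₀ ℕ)) (hs : s.Nonempty) :
    ∃ a ∈ s, ∀ b ∈ s, σ.le b a := by
  classical
  induction s using Finset.induction with
  | empty => exact absurd hs (by simp)
  | @insert x s hx IH =>
    by_cases h : s.Nonempty
    · obtain ⟨a, ha, hmax⟩ := IH h
      rcases σ.le_total x a with h1 | h1
      · exact ⟨a, Finset.mem_insert_of_mem ha, by
          intro b hb
          rcases Finset.mem_insert.1 hb with rfl | hb
          · exact h1
          · exact hmax b hb⟩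
      · exact ⟨x, Finset.mem_insert_self _ _, by
          intro b hb
          rcases Finset.mem_insert.1 hb with rfl | hb
          · exact σ.le_refl b
          · exact σ.le_trans _ _ _ (hmax b hb) h1⟩
    · rw [Finset.not_nonempty_iff_eq_empty] at h
      subst h
      exact ⟨x, Finset.mem_insert_self _ _, by
        intro b hb
        rcases Finset.mem_insert.1 hb with rfl | hb
        · exact σ.le_refl b
        · simp at hb⟩

variable {K : Type} [Field K]

theorem lexp_unique {f : MvPolynomial (Fin n) K} {a b : Fin n →₀ ℕ}
    (ha : IsLeadingExp σ f a) (hb : IsLeadingExp σ f b) : a = b :=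
  σ.le_antisymm _ _ (hb.2 a ha.1) (ha.2 b hb.1)

theorem exists_lexp {f : MvPolynomial (Fin n) K} (hf : f ≠ 0) :
    ∃ a, IsLeadingExp σ f a := by
  obtain ⟨a, ha, hmax⟩ := max_exists σ f.support (by rwa [MvPolynomial.support_nonempty])
  exact ⟨a, ha, hmax⟩

end RGB

namespace RGB

variable {n : ℕ} (σ : MonomialOrd (Fin n)) {K : Type} [Field K]
  (I : Ideal (MvPolynomial (Fin n) K))

/-- The set of leading exponents of elements of `I`. -/
def Eset : Set (Fin n →₀ ℕ) := {a | ∃ f ∈ I, IsLeadingExp σ f a}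

theorem Eset_upper {a b : Fin n →₀ ℕ} (ha : a ∈ Eset σ I) (hab : a ≤ b) :
    b ∈ Eset σ I := by
  classical
  obtain ⟨f, hfI, hfa, hfmax⟩ := ha
  refine ⟨monomial (b - a) 1 * f, I.mul_mem_left _ hfI, ?_, ?_⟩
  · rw [MvPolynomial.mem_support_iff, coeff_monomial_mul', if_pos tsub_le_self,
      tsub_tsub_cancel_of_le hab, one_mul]
    exact MvPolynomial.mem_support_iff.1 hfa
  · intro m hm
    have := MvPolynomial.support_mul _ f hm
    rw [Finset.mem_add] at this
    obtain ⟨m₁, hm₁, m₂, hm₂, rfl⟩ := this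
    have hm₁' : m₁ = b - a := by
      have := MvPolynomial.support_monomial_subset hm₁
      simpa using this
    subst hm₁'
    have h2 : σ.le m₂ a := hfmax m₂ hm₂
    have := σ.add_le_add m₂ a (b - a) h2
    rwa [add_comm a, tsub_add_cancel_of_le hab, add_comm m₂] at this

/-- Minimal elements of `Eset` with respect to divisibility. -/
def MinE : Set (Fin n →₀ ℕ) :=
  {e | e ∈ Eset σ I ∧ ∀ x ∈ Eset σ I, x ≤ e → x = e}

theorem exists_min {a : Fin n →₀ ℕ} (ha : a ∈ Eset σ I) :
    ∃ e ∈ MinE σ I, e ≤ a := by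
  obtain ⟨m, hm, hmin⟩ := (wellFounded_lt (α := Fin n →₀ ℕ)).has_min
    {x | x ∈ Eset σ I ∧ x ≤ a} ⟨a, ha, le_rfl⟩
  refine ⟨m, ⟨hm.1, fun x hx hxm => ?_⟩, hm.2⟩
  by_contra hne
  exact hmin x ⟨hx, le_trans hxm hm.2⟩ (lt_of_le_of_ne hxm hne)

theorem MinE_finite : (MinE σ I).Finite := by
  by_contra h
  have hinf : (MinE σ I).Infinite := h
  let f := hinf.natEmbedding
  obtain ⟨m, k, hmk, hle⟩ := (Set.partiallyWellOrderedOn_iff_exists_lt.1 (Set.isPWO_of_wellQuasiOrderedLE (MinE σ I)))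
    (fun i => (f i : Fin n →₀ ℕ)) (fun i => (f i).2)
  have heq : ((f m : Fin n →₀ ℕ)) = (f k : Fin n →₀ ℕ) :=
    (f k).2.2 _ (f m).2.1 hle
  exact absurd (f.injective (Subtype.ext heq)) (Nat.ne_of_lt hmk)

end RGB

namespace RGB

variable {n : ℕ} (σ : MonomialOrd (Fin n)) {K : Type} [Field K]
  (I : Ideal (MvPolynomial (Fin n) K))

theorem exists_reduced {e : Fin n →₀ ℕ} (he : e ∈ Eset σ I) :
    ∃ g, g ∈ I ∧ IsLeadingExp σ g e ∧ MvPolynomial.coeff e g = 1 ∧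
      ∀ m ∈ g.support, m ≠ e → m ∉ Eset σ I := by
  classical
  have main : ∀ b : Fin n →₀ ℕ, ∀ g, g ∈ I → IsLeadingExp σ g e →
      MvPolynomial.coeff e g = 1 →
      (∀ m ∈ g.support, m ≠ e → m ∈ Eset σ I → slt σ m b) →
      ∃ h, h ∈ I ∧ IsLeadingExp σ h e ∧ MvPolynomial.coeff e h = 1 ∧
        ∀ m ∈ h.support, m ≠ e → m ∉ Eset σ I := by
    intro b
    induction b using WellFounded.induction (slt_wf σ) with
    | _ b IH =>
    intro g hgI hgl hgc hbnd
    by_cases hred : ∀ m ∈ g.support, m ≠ e → m ∉ Eset σ I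
    · exact ⟨g, hgI, hgl, hgc, hred⟩
    · push_neg at hred
      obtain ⟨m₀, hm₀s, hm₀e, hm₀E⟩ := hred
      set Bad : Finset (Fin n →₀ ℕ) :=
        g.support.filter (fun m => m ≠ e ∧ m ∈ Eset σ I) with hBad
      have hBadne : Bad.Nonempty := ⟨m₀, by simp [hBad, hm₀s, hm₀e, hm₀E]⟩
      obtain ⟨b', hb'Bad, hb'max⟩ := max_exists σ Bad hBadne
      have hb's : b' ∈ g.support := (Finset.mem_filter.1 hb'Bad).1
      have hb'e : b' ≠ e := (Finset.mem_filter.1 hb'Bad).2.1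
      have hb'E : b' ∈ Eset σ I := (Finset.mem_filter.1 hb'Bad).2.2
      have hb'lt : slt σ b' b := hbnd b' hb's hb'e hb'E
      obtain ⟨f, hfI, hfs, hfmax⟩ := hb'E
      have hfc : MvPolynomial.coeff b' f ≠ 0 := MvPolynomial.mem_support_iff.1 hfs
      set q : K := MvPolynomial.coeff b' g / MvPolynomial.coeff b' f with hq
      set g' := g - MvPolynomial.C q * f with hg'
      have hcoeff : ∀ m, MvPolynomial.coeff m g' =
          MvPolynomial.coeff m g - q * MvPolynomial.coeff m f := by
        intro m
        rw [hg', MvPolynomial.coeff_sub, MvPolynomial.coeff_C_mul]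
      have hg'I : g' ∈ I := I.sub_mem hgI (I.mul_mem_left _ hfI)
      have hb'z : MvPolynomial.coeff b' g' = 0 := by
        rw [hcoeff, hq, div_mul_cancel₀ _ hfc, sub_self]
      have hsupp : ∀ m ∈ g'.support, m ∈ g.support ∨ m ∈ f.support := by
        intro m hm
        rw [MvPolynomial.mem_support_iff] at hm
        rw [hcoeff] at hm
        by_contra hcon
        push_neg at hcon
        rw [MvPolynomial.notMem_support_iff.1 hcon.1,
          MvPolynomial.notMem_support_iff.1 hcon.2, mul_zero, sub_zero] at hm
        exact hm rfl
      -- b' is strictly below e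
      have hb'le : σ.le b' e := hgl.2 b' hb's
      have hfe : MvPolynomial.coeff e f = 0 := by
        by_contra hc
        have := hfmax e (MvPolynomial.mem_support_iff.2 hc)
        exact hb'e (σ.le_antisymm _ _ hb'le this)
      have hg'c : MvPolynomial.coeff e g' = 1 := by
        rw [hcoeff, hfe, mul_zero, sub_zero, hgc]
      have hg'l : IsLeadingExp σ g' e := by
        refine ⟨MvPolynomial.mem_support_iff.2 (by rw [hg'c]; exact one_ne_zero), ?_⟩
        intro m hm
        rcases hsupp m hm with h | h
        · exact hgl.2 m h
        · exact σ.le_trans _ _ _ (hfmax m h) hb'le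
      refine IH b' hb'lt g' hg'I hg'l hg'c ?_
      intro m hm hme hmE
      have hmb' : m ≠ b' := by
        intro hmb
        rw [MvPolynomial.mem_support_iff, hmb, hb'z] at hm
        exact hm rfl
      rcases hsupp m hm with h | h
      · have : m ∈ Bad := Finset.mem_filter.2 ⟨h, hme, hmE⟩
        exact ⟨hb'max m this, hmb'⟩
      · exact ⟨hfmax m h, hmb'⟩
  obtain ⟨f, hfI, hfl⟩ := he
  have hfc : MvPolynomial.coeff e f ≠ 0 := MvPolynomial.mem_support_iff.1 hfl.1
  set g₀ := MvPolynomial.C (MvPolynomial.coeff e f)⁻¹ * f with hg₀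
  have hc₀ : ∀ m, MvPolynomial.coeff m g₀ =
      (MvPolynomial.coeff e f)⁻¹ * MvPolynomial.coeff m f := fun m =>
    MvPolynomial.coeff_C_mul m _ f
  have hsupp₀ : g₀.support = f.support := by
    ext m
    simp only [MvPolynomial.mem_support_iff, hc₀]
    constructor
    · intro h hc; exact h (by rw [hc, mul_zero])
    · intro h; exact mul_ne_zero (inv_ne_zero hfc) h
  refine main e g₀ (I.mul_mem_left _ hfI) ⟨by rw [hsupp₀]; exact hfl.1,
    by rw [hsupp₀]; exact hfl.2⟩ (by rw [hc₀, inv_mul_cancel₀ hfc]) ?_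
  intro m hm hme _
  rw [hsupp₀] at hm
  exact ⟨hfl.2 m hm, hme⟩

end RGB

namespace RGB

variable {n : ℕ} {K : Type} [Field K]

/-- The ideal of polynomials all of whose monomials are divisible by some element of `A`. -/
def uIdeal (A : Set (Fin n →₀ ℕ)) : Ideal (MvPolynomial (Fin n) K) where
  carrier := {f | ∀ m ∈ f.support, ∃ s ∈ A, s ≤ m}
  zero_mem' := by simp
  add_mem' := by
    intro f g hf hg m hm
    classical
    rcases Finset.mem_union.1 (MvPolynomial.support_add hm) with h | h
    · exact hf m h
    · exact hg m h
  smul_mem' := by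
    intro c f hf m hm
    classical
    rw [smul_eq_mul] at hm
    obtain ⟨m₁, _, m₂, hm₂, rfl⟩ := Finset.mem_add.1 (MvPolynomial.support_mul c f hm)
    obtain ⟨s, hs, hsm⟩ := hf m₂ hm₂
    exact ⟨s, hs, hsm.trans (le_add_self)⟩

theorem span_mono_le (A : Set (Fin n →₀ ℕ)) :
    Ideal.span {m | ∃ s ∈ A, m = MvPolynomial.monomial s (1 : K)} ≤ uIdeal A := by
  rw [Ideal.span_le]
  rintro _ ⟨s, hs, rfl⟩
  intro m hm
  classical
  have := MvPolynomial.support_monomial_subset hm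
  simp only [Finset.mem_singleton] at this
  exact ⟨s, hs, this ▸ le_rfl⟩

theorem dvd_mem_span {A : Set (Fin n →₀ ℕ)} {s a : Fin n →₀ ℕ} (hs : s ∈ A)
    (hsa : s ≤ a) (c : K) :
    MvPolynomial.monomial a c ∈
      Ideal.span {m | ∃ s ∈ A, m = MvPolynomial.monomial s (1 : K)} := by
  have h1 : MvPolynomial.monomial s (1 : K) ∈
      Ideal.span {m | ∃ s ∈ A, m = MvPolynomial.monomial s (1 : K)} :=
    Ideal.subset_span ⟨s, hs, rfl⟩
  have h2 := Ideal.mul_mem_left _ (MvPolynomial.monomial (a - s) c) h1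
  rwa [MvPolynomial.monomial_mul, mul_one, tsub_add_cancel_of_le hsa] at h2

/-- If two sets of monomials span the same ideal, their divisibility upper sets agree. -/
theorem upper_eq_of_span_eq {A B : Set (Fin n →₀ ℕ)}
    (h : Ideal.span {m | ∃ s ∈ A, m = MvPolynomial.monomial s (1 : K)} =
      Ideal.span {m | ∃ s ∈ B, m = MvPolynomial.monomial s (1 : K)}) (a : Fin n →₀ ℕ) :
    (∃ s ∈ A, s ≤ a) ↔ ∃ s ∈ B, s ≤ a := by
  constructor
  · rintro ⟨s, hs, hsa⟩
    have := span_mono_le (K := K) B (h ▸ dvd_mem_span hs hsa (1 : K))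
    have ha := this a (by
      rw [MvPolynomial.mem_support_iff, MvPolynomial.coeff_monomial, if_pos rfl]
      exact one_ne_zero)
    exact ha
  · rintro ⟨s, hs, hsa⟩
    have := span_mono_le (K := K) A (h ▸ dvd_mem_span hs hsa (1 : K))
    exact this a (by
      rw [MvPolynomial.mem_support_iff, MvPolynomial.coeff_monomial, if_pos rfl]
      exact one_ne_zero)

end RGB


/-- uniqueness of the reduced Gröbner basis: a nonzero ideal has exactly one
reduced σ-Gröbner basis: a σ-Gröbner basis all of whose elements are monic (σ-leading
coefficient 1) and such that no monomial occurring in an element `g` is divisible by the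
σ-leading monomial of another element. -/
theorem reduced_groebner_basis_unique {K : Type} [Field K] {n : ℕ}
    (σ : MonomialOrd (Fin n)) (I : Ideal (MvPolynomial (Fin n) K)) (hI : I ≠ ⊥) :
    ∃! G : Finset (MvPolynomial (Fin n) K),
      IsGroebnerBasis σ I G ∧
      (∀ g ∈ G, ∃ a, IsLeadingExp σ g a ∧ MvPolynomial.coeff a g = 1) ∧
      (∀ g ∈ G, ∀ g' ∈ G, g' ≠ g →
        ∀ a ∈ g.support, ∀ b, IsLeadingExp σ g' b → ¬ b ≤ a) := by
  classical
  have hMfin := RGB.MinE_finite σ I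
  have hex : ∀ e : Fin n →₀ ℕ, ∃ g : MvPolynomial (Fin n) K, e ∈ RGB.MinE σ I →
      g ∈ I ∧ IsLeadingExp σ g e ∧ MvPolynomial.coeff e g = 1 ∧
        ∀ m ∈ g.support, m ≠ e → m ∉ RGB.Eset σ I := by
    intro e
    by_cases he : e ∈ RGB.MinE σ I
    · obtain ⟨g, h⟩ := RGB.exists_reduced σ I he.1
      exact ⟨g, fun _ => h⟩
    · exact ⟨0, fun h => absurd h he⟩
  choose gf hgf using hex
  set G : Finset (MvPolynomial (Fin n) K) := hMfin.toFinset.image gf with hGdef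
  have hmemG : ∀ g, g ∈ G ↔ ∃ e ∈ RGB.MinE σ I, gf e = g := by
    intro g
    simp only [hGdef, Finset.mem_image, Set.Finite.mem_toFinset]
  have hgfl : ∀ e ∈ RGB.MinE σ I, IsLeadingExp σ (gf e) e := fun e he => (hgf e he).2.1
  -- generator sets
  have hIgens : {m | ∃ f ∈ I, ∃ a, IsLeadingExp σ f a ∧ m = monomial a (1 : K)} =
      {m | ∃ s ∈ RGB.Eset σ I, m = monomial s (1 : K)} := by
    ext m
    constructor
    · rintro ⟨f, hf, a, h, rfl⟩
      exact ⟨a, ⟨f, hf, h⟩, rfl⟩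
    · rintro ⟨s, ⟨f, hf, h⟩, rfl⟩
      exact ⟨f, hf, s, h, rfl⟩
  have hGgens : {m | ∃ g ∈ G, ∃ a, IsLeadingExp σ g a ∧ m = monomial a (1 : K)} =
      {m | ∃ s ∈ RGB.MinE σ I, m = monomial s (1 : K)} := by
    ext m
    constructor
    · rintro ⟨g, hgG, a, hla, rfl⟩
      obtain ⟨e, heM, rfl⟩ := (hmemG g).1 hgG
      have ha : a = e := RGB.lexp_unique σ hla (hgfl e heM)
      exact ⟨e, heM, by rw [ha]⟩
    · rintro ⟨e, heM, rfl⟩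
      exact ⟨gf e, (hmemG _).2 ⟨e, heM, rfl⟩, e, hgfl e heM, rfl⟩
  have hspanME : Ideal.span {m | ∃ s ∈ RGB.MinE σ I, m = monomial s (1 : K)} =
      Ideal.span {m | ∃ s ∈ RGB.Eset σ I, m = monomial s (1 : K)} := by
    apply le_antisymm
    · rw [Ideal.span_le]
      rintro _ ⟨s, hs, rfl⟩
      exact Ideal.subset_span ⟨s, hs.1, rfl⟩
    · rw [Ideal.span_le]
      rintro _ ⟨s, hs, rfl⟩
      obtain ⟨e, heM, hle⟩ := RGB.exists_min σ I hs
      exact RGB.dvd_mem_span heM hle 1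
  refine ⟨G, ⟨⟨?_, ?_⟩, ?_, ?_⟩, ?_⟩
  · -- G ⊆ I
    intro g hg
    obtain ⟨e, heM, rfl⟩ := (hmemG g).1 hg
    exact (hgf e heM).1
  · -- span equality
    rw [hGgens, ltIdeal, hIgens, hspanME]
  · -- monic
    intro g hg
    obtain ⟨e, heM, rfl⟩ := (hmemG g).1 hg
    exact ⟨e, hgfl e heM, (hgf e heM).2.2.1⟩
  · -- reduced
    intro g hg g' hg' hne a ha b hlb
    obtain ⟨e, heM, rfl⟩ := (hmemG g).1 hg
    obtain ⟨e', he'M, rfl⟩ := (hmemG g').1 hg'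
    have hb : b = e' := RGB.lexp_unique σ hlb (hgfl e' he'M)
    have hee' : e' ≠ e := fun h => hne (by rw [h])
    intro hba
    rw [hb] at hba
    by_cases hae : a = e
    · subst hae
      exact hee' (heM.2 e' he'M.1 hba)
    · have haE : a ∈ RGB.Eset σ I := RGB.Eset_upper σ I he'M.1 hba
      exact (hgf e heM).2.2.2 a ha hae haE
  · -- uniqueness
    rintro G' ⟨⟨hG'I, hG'span⟩, hmono, hred⟩
    have hG'gens : {m | ∃ g ∈ G', ∃ a, IsLeadingExp σ g a ∧ m = monomial a (1 : K)} =
        {m | ∃ s ∈ {a | ∃ g ∈ G', IsLeadingExp σ g a}, m = monomial s (1 : K)} := by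
      ext m
      constructor
      · rintro ⟨g, hg, a, h, rfl⟩
        exact ⟨a, ⟨g, hg, h⟩, rfl⟩
      · rintro ⟨s, ⟨g, hg, h⟩, rfl⟩
        exact ⟨g, hg, s, h, rfl⟩
    rw [hG'gens, ltIdeal, hIgens] at hG'span
    have hupper := RGB.upper_eq_of_span_eq hG'span
    have hLG'E : ∀ a, (∃ g ∈ G', IsLeadingExp σ g a) → a ∈ RGB.Eset σ I := by
      rintro a ⟨g, hg, hl⟩
      exact ⟨g, hG'I hg, hl⟩
    have hMLG' : ∀ e ∈ RGB.MinE σ I, ∃ g ∈ G', IsLeadingExp σ g e := by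
      intro e he
      obtain ⟨s, hs, hse⟩ := (hupper e).2 ⟨e, he.1, le_rfl⟩
      have hseq : s = e := he.2 s (hLG'E s hs) hse
      rwa [hseq] at hs
    have hLG'M : ∀ a, ∀ g ∈ G', IsLeadingExp σ g a → a ∈ RGB.MinE σ I := by
      intro a g hgG' hla
      have haE : a ∈ RGB.Eset σ I := hLG'E a ⟨g, hgG', hla⟩
      obtain ⟨e, heM, hle⟩ := RGB.exists_min σ I haE
      obtain ⟨g₂, hg₂, hl₂⟩ := hMLG' e heM
      by_cases hgg : g₂ = g
      · subst hgg
        have : e = a := RGB.lexp_unique σ hl₂ hla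
        rwa [← this]
      · exact absurd hle (hred g hgG' g₂ hg₂ hgg a hla.1 e hl₂)
    have key : ∀ g ∈ G', ∃ e ∈ RGB.MinE σ I, g = gf e := by
      intro g hg
      obtain ⟨a, hla, hco⟩ := hmono g hg
      have haM : a ∈ RGB.MinE σ I := hLG'M a g hg hla
      have hgred : ∀ m ∈ g.support, m ≠ a → m ∉ RGB.Eset σ I := by
        intro m hm hma hmE
        obtain ⟨e, heM, hle⟩ := RGB.exists_min σ I hmE
        obtain ⟨g₂, hg₂, hl₂⟩ := hMLG' e heM
        by_cases hgg : g₂ = g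
        · subst hgg
          have hea : e = a := RGB.lexp_unique σ hl₂ hla
          subst hea
          exact hma (σ.le_antisymm _ _ (hla.2 m hm) (RGB.le_of_dvd σ hle))
        · exact (hred g hg g₂ hg₂ hgg m hm e hl₂) hle
      have h2 := hgf a haM
      have hdiff : g - gf a = 0 := by
        by_contra hne
        obtain ⟨c, hc⟩ := RGB.exists_lexp σ hne
        have hcI : g - gf a ∈ I := I.sub_mem (hG'I hg) h2.1
        have hcE : c ∈ RGB.Eset σ I := ⟨g - gf a, hcI, hc⟩
        have hca : c ≠ a := by
          intro h
          have := MvPolynomial.mem_support_iff.1 hc.1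
          rw [h, MvPolynomial.coeff_sub, hco, h2.2.2.1, sub_self] at this
          exact this rfl
        have hcs : c ∈ g.support ∨ c ∈ (gf a).support := by
          have := MvPolynomial.mem_support_iff.1 hc.1
          rw [MvPolynomial.coeff_sub] at this
          by_contra hcon
          push_neg at hcon
          rw [MvPolynomial.notMem_support_iff.1 hcon.1,
            MvPolynomial.notMem_support_iff.1 hcon.2, sub_zero] at this
          exact this rfl
        rcases hcs with h | h
        · exact hgred c h hca hcE
        · exact h2.2.2.2 c h hca hcE
      exact ⟨a, haM, eq_of_sub_eq_zero hdiff⟩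
    apply Finset.ext
    intro g
    constructor
    · intro hg
      obtain ⟨e, heM, hge⟩ := key g hg
      exact (hmemG g).2 ⟨e, heM, hge.symm⟩
    · intro hg
      obtain ⟨e, heM, rfl⟩ := (hmemG g).1 hg
      obtain ⟨g₂, hg₂, hl₂⟩ := hMLG' e heM
      obtain ⟨e₂, he₂M, hgeq⟩ := key g₂ hg₂
      have he₂ : e₂ = e := RGB.lexp_unique σ (hgeq ▸ hgfl e₂ he₂M) hl₂
      rw [← he₂, ← hgeq]
      exact hg₂
end

section
/- Let K be a field, let a₁,…,aₙ ∈ ℕ^s be exponent vectors, and let φ : K[x₁,…,xₙ] → K[t₁,…,tₛ] be the K-algebra homomorphism sending xᵢ to the monomial t^{aᵢ}. Then the kernel of φ (the toric ideal of a₁,…,aₙ) is a prime ideal, and it is generated by binomials: ker φ equals the ideal generated by { X^u − X^v : u, v ∈ ℕⁿ with Σᵢ uᵢ aᵢ = Σᵢ vᵢ aᵢ }. -/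
open MvPolynomial

lemma prod_monomial_one {K : Type} [Field K] {s n : ℕ} (t : Finset (Fin n))
    (f : Fin n → (Fin s →₀ ℕ)) :
    (∏ i ∈ t, monomial (f i) (1 : K)) = monomial (∑ i ∈ t, f i) (1 : K) := by
  classical
  induction t using Finset.induction with
  | empty => simp [monomial_zero']
  | insert _ _ h ih =>
      rw [Finset.prod_insert h, Finset.sum_insert h, ih, monomial_mul, one_mul]

lemma phi_mono {K : Type} [Field K] {s n : ℕ} (a : Fin n → (Fin s →₀ ℕ))
    (u : Fin n →₀ ℕ) (c : K) :
    aeval (fun i => monomial (a i) (1 : K)) (monomial u c)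
      = monomial (∑ i, u i • a i) c := by
  classical
  rw [aeval_monomial]
  have h1 : (u.prod fun i k => (monomial (a i) (1 : K)) ^ k)
      = ∏ i ∈ u.support, monomial (u i • a i) (1 : K) := by
    apply Finset.prod_congr rfl
    intro i _
    simp [monomial_pow]
  rw [h1, prod_monomial_one]
  have h2 : (∑ i ∈ u.support, u i • a i) = ∑ i, u i • a i := by
    apply Finset.sum_subset (Finset.subset_univ _)
    intro i _ hi
    rw [Finsupp.notMem_support_iff] at hi
    simp [hi]
  rw [h2]
  have : (algebraMap K (MvPolynomial (Fin s) K)) c = C c := rfl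
  rw [this, C_mul_monomial, mul_one]

lemma coeff_phi {K : Type} [Field K] {s n : ℕ} (a : Fin n → (Fin s →₀ ℕ))
    (p : MvPolynomial (Fin n) K) (w : Fin s →₀ ℕ) :
    coeff w (aeval (fun i => monomial (a i) (1 : K)) p)
      = ∑ u ∈ p.support.filter (fun u => (∑ i, u i • a i) = w), coeff u p := by
  classical
  conv_lhs => rw [p.as_sum, map_sum]
  rw [MvPolynomial.coeff_sum]
  simp only [phi_mono, coeff_monomial]
  rw [Finset.sum_filter]

/-- the toric ideal of `a₁,…,aₙ ∈ ℕˢ`, i.e. the kernel of the `K`-algebra map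
`K[x₁,…,xₙ] → K[t₁,…,tₛ]`, `xᵢ ↦ t^{aᵢ}`, is prime and is generated by the binomials
`X^u − X^v` with `Σ uᵢ aᵢ = Σ vᵢ aᵢ`. -/
theorem toric_ideal_prime_and_binomial {K : Type} [Field K] {s n : ℕ}
    (a : Fin n → (Fin s →₀ ℕ))
    (φ : MvPolynomial (Fin n) K →ₐ[K] MvPolynomial (Fin s) K)
    (hφ : φ = MvPolynomial.aeval (fun i => monomial (a i) (1 : K))) :
    (RingHom.ker φ).IsPrime ∧
    RingHom.ker φ =
      Ideal.span { p : MvPolynomial (Fin n) K |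
        ∃ u v : Fin n →₀ ℕ, (∑ i, u i • a i) = (∑ i, v i • a i) ∧
          p = monomial u (1 : K) - monomial v (1 : K) } := by
  classical
  subst hφ
  set ψ : MvPolynomial (Fin n) K →ₐ[K] MvPolynomial (Fin s) K :=
    aeval (fun i => monomial (a i) (1 : K)) with hψ
  set S : Set (MvPolynomial (Fin n) K) :=
    { p : MvPolynomial (Fin n) K |
        ∃ u v : Fin n →₀ ℕ, (∑ i, u i • a i) = (∑ i, v i • a i) ∧
          p = monomial u (1 : K) - monomial v (1 : K) } with hS
  constructor
  · exact RingHom.ker_isPrime _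
  · apply le_antisymm
    · -- ker ≤ span
      intro p hp
      rw [RingHom.mem_ker] at hp
      suffices H : ∀ N (p : MvPolynomial (Fin n) K), p.support.card ≤ N →
          ψ p = 0 → p ∈ Ideal.span S by
        exact H _ p le_rfl hp
      intro N
      induction N with
      | zero =>
          intro p hc _
          have : p.support = ∅ := Finset.card_eq_zero.mp (Nat.le_zero.mp hc)
          have hp0 : p = 0 := MvPolynomial.support_eq_empty.mp this
          simp [hp0]
      | succ N ih =>
          intro p hc hp
          by_cases h0 : p = 0
          · simp [h0]
          · obtain ⟨u, hu⟩ := (MvPolynomial.support_nonempty.mpr h0)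
            have hcu : coeff u p ≠ 0 := MvPolynomial.mem_support_iff.mp hu
            have hsum : ∑ w ∈ p.support.filter
                (fun w => (∑ i, w i • a i) = (∑ i, u i • a i)), coeff w p = 0 := by
              rw [← coeff_phi]
              rw [← hψ, hp, coeff_zero]
            have hex : ∃ v ∈ p.support.filter
                (fun w => (∑ i, w i • a i) = (∑ i, u i • a i)), v ≠ u := by
              by_contra h
              push_neg at h
              have hfu : p.support.filter
                  (fun w => (∑ i, w i • a i) = (∑ i, u i • a i)) = {u} := by
                apply Finset.eq_singleton_iff_unique_mem.mpr
                refine ⟨Finset.mem_filter.mpr ⟨hu, rfl⟩, fun x hx => h x hx⟩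
              rw [hfu, Finset.sum_singleton] at hsum
              exact hcu hsum
            obtain ⟨v, hvf, hvu⟩ := hex
            obtain ⟨hvsupp, hva⟩ := Finset.mem_filter.mp hvf
            set c := coeff u p with hc'
            set b : MvPolynomial (Fin n) K :=
              monomial u (1 : K) - monomial v (1 : K) with hb
            have hbS : b ∈ S := ⟨u, v, hva.symm.trans rfl ▸ hva.symm, rfl⟩
            have hφb : ψ b = 0 := by
              rw [hb, map_sub, hψ, phi_mono, phi_mono, hva]
              ring
            set q := p - C c * b with hq
            have hq0 : ψ q = 0 := by
              rw [hq, map_sub, map_mul, hp, hφb]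
              ring
            have hqsupp : q.support ⊆ p.support.erase u := by
              intro w hw
              rw [MvPolynomial.mem_support_iff] at hw
              have hcoeff : coeff w q = coeff w p
                  - c * ((if u = w then (1:K) else 0) - (if v = w then (1:K) else 0)) := by
                simp [hq, hb, coeff_monomial, mul_sub]
              by_cases hwu : w = u
              · exfalso
                apply hw
                rw [hcoeff, hwu]
                have : (if v = u then (1:K) else 0) = 0 := by simp [hvu]
                simp [this, hc']
              · rw [Finset.mem_erase]
                refine ⟨hwu, ?_⟩
                by_cases hwv : w = v
                · subst hwv; exact hvsupp
                · rw [MvPolynomial.mem_support_iff]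
                  intro hcw
                  apply hw
                  rw [hcoeff, hcw]
                  have h1 : (if u = w then (1:K) else 0) = 0 :=
                    if_neg (fun h => hwu h.symm)
                  have h2 : (if v = w then (1:K) else 0) = 0 :=
                    if_neg (fun h => hwv h.symm)
                  rw [h1, h2]
                  ring
            have hqcard : q.support.card ≤ N := by
              have h1 := Finset.card_le_card hqsupp
              rw [Finset.card_erase_of_mem hu] at h1
              omega
            have hqmem := ih q hqcard hq0
            have hpq : p = q + C c * b := by rw [hq]; ring
            rw [hpq]
            exact Ideal.add_mem _ hqmem
              (Ideal.mul_mem_left _ _ (Ideal.subset_span hbS))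
    · -- span ≤ ker
      rw [Ideal.span_le]
      rintro p ⟨u, v, huv, rfl⟩
      rw [SetLike.mem_coe, RingHom.mem_ker]
      show ψ _ = 0
      rw [map_sub, hψ, phi_mono, phi_mono, huv]
      ring
end

section
/- (Shape of a zero-dimensional radical ideal in normal position) Let K be an algebraically closed field and I ⊆ K[x₁,…,xₙ] a radical zero-dimensional ideal, and suppose the finitely many points of the variety V(I) = { p ∈ Kⁿ : f(p) = 0 for all f ∈ I } have pairwise distinct last coordinates. Then there exist univariate polynomials g₁,…,g_{n−1} ∈ K[z] and a monic squarefree polynomial gₙ ∈ K[z] of degree equal to the number of points of V(I) such that I is generated by x₁ − g₁(xₙ), …, x_{n−1} − g_{n−1}(xₙ), gₙ(xₙ). -/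
open MvPolynomial

/-- The variety (set of common zeros in `Kⁿ`) of an ideal `I ⊆ K[x₁,…,xₙ]`. -/
def varietyOf {K : Type} [Field K] {N : ℕ} (I : Ideal (MvPolynomial (Fin N) K)) :
    Set (Fin N → K) :=
  { p | ∀ f ∈ I, MvPolynomial.eval p f = 0 }

/-- shape of a zero-dimensional radical ideal in normal position: over an
algebraically closed field, a radical zero-dimensional ideal `I ⊆ K[x₁,…,x_{n+1}]` whose
(finitely many) zeros have pairwise distinct last coordinates is generated by
`x₁ − g₁(x_{n+1}), …, xₙ − gₙ(x_{n+1}), g_{n+1}(x_{n+1})`, where the `gᵢ` are univariate and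
`g_{n+1}` is monic, squarefree, of degree equal to the number of points of `V(I)`. -/
theorem shape_lemma {K : Type} [Field K] [IsAlgClosed K] {n : ℕ}
    (I : Ideal (MvPolynomial (Fin (n + 1)) K))
    (hrad : I.IsRadical)
    (hdim : FiniteDimensional K (MvPolynomial (Fin (n + 1)) K ⧸ I))
    (hinj : Set.InjOn (fun p : Fin (n + 1) → K => p (Fin.last n)) (varietyOf I)) :
    ∃ (g : Fin n → Polynomial K) (gn : Polynomial K),
      gn.Monic ∧ Squarefree gn ∧ gn.natDegree = (varietyOf I).ncard ∧
      I = Ideal.span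
        ({ p | ∃ i : Fin n,
            p = X i.castSucc -
              Polynomial.aeval (R := K) (X (Fin.last n) : MvPolynomial (Fin (n + 1)) K) (g i) } ∪
         { Polynomial.aeval (R := K) (X (Fin.last n) : MvPolynomial (Fin (n + 1)) K) gn }) := by
  classical
  -- abbreviations
  set P := MvPolynomial (Fin (n + 1)) K
  -- mv aeval over K equals eval
  have mvae : ∀ (p : Fin (n + 1) → K) (f : P), MvPolynomial.aeval p f = MvPolynomial.eval p f := by
    intro p f
    rw [← MvPolynomial.coe_aeval_eq_eval]
    rfl
  -- Nullstellensatz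
  have hVZ : varietyOf I = MvPolynomial.zeroLocus K I := rfl
  have hNull : MvPolynomial.vanishingIdeal K (MvPolynomial.zeroLocus K I) = I := by
    rw [MvPolynomial.vanishingIdeal_zeroLocus_eq_radical, hrad.radical]
  -- finiteness of the variety
  have hroot : ∀ i : Fin (n + 1), ∃ q : Polynomial K, q ≠ 0 ∧
      ∀ p ∈ varietyOf I, Polynomial.eval (p i) q = 0 := by
    intro i
    obtain ⟨q, hqm, hq0⟩ : IsIntegral K (Ideal.Quotient.mk I (X i : P)) :=
      IsIntegral.of_finite K _
    refine ⟨q, hqm.ne_zero, fun p hp => ?_⟩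
    have hmem : Polynomial.aeval (X i : P) q ∈ I := by
      rw [← Ideal.Quotient.eq_zero_iff_mem, ← Ideal.Quotient.mkₐ_eq_mk K I,
        ← Polynomial.aeval_algHom_apply]
      rw [Ideal.Quotient.mkₐ_eq_mk K I]
      exact hq0
    have := hp _ hmem
    rw [← mvae, ← Polynomial.aeval_algHom_apply] at this
    simpa [Polynomial.coe_aeval_eq_eval] using this
  choose qs hqs0 hqsroot using hroot
  have hfin : (varietyOf I).Finite := by
    refine Set.Finite.subset (Set.Finite.pi (fun i => Polynomial.finite_setOf_isRoot (hqs0 i)))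
      (fun p hp => ?_)
    intro i _
    exact hqsroot i p hp
  -- the finite set of points and node values
  set S : Finset (Fin (n + 1) → K) := hfin.toFinset with hSdef
  have hmemS : ∀ p, p ∈ S ↔ p ∈ varietyOf I := fun p => hfin.mem_toFinset
  set v : (Fin (n + 1) → K) → K := fun p => p (Fin.last n) with hvdef
  have hvinj : Set.InjOn v ↑S := by
    rw [hSdef, hfin.coe_toFinset]
    exact hinj
  -- the univariate polynomials
  set g : Fin n → Polynomial K :=
    fun i => Lagrange.interpolate S v (fun p => p i.castSucc) with hgdef
  set gn : Polynomial K := ∏ p ∈ S, (Polynomial.X - Polynomial.C (v p)) with hgndef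
  have heval_g : ∀ (i : Fin n), ∀ p ∈ S, Polynomial.eval (v p) (g i) = p i.castSucc :=
    fun i p hp => Lagrange.eval_interpolate_at_node _ hvinj hp
  have hgnmonic : gn.Monic :=
    Polynomial.monic_prod_of_monic _ _ fun p _ => Polynomial.monic_X_sub_C _
  have hgnsep : gn.Separable := by
    refine Polynomial.separable_prod_X_sub_C_iff'.mpr ?_
    intro x hx y hy hxy
    exact hvinj hx hy hxy
  have hgnsf : Squarefree gn := hgnsep.squarefree
  have hgndeg : gn.natDegree = (varietyOf I).ncard := by
    rw [hgndef, Polynomial.natDegree_prod _ _ (fun p _ => Polynomial.X_sub_C_ne_zero (v p))]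
    simp [Set.ncard_eq_toFinset_card _ hfin, hSdef]
  -- substitution maps
  set G : Fin (n + 1) → Polynomial K := fun j => Fin.lastCases Polynomial.X g j with hGdef
  set A : Polynomial K →ₐ[K] P :=
    Polynomial.aeval (R := K) (X (Fin.last n) : P) with hAdef
  set φ : P →ₐ[K] Polynomial K := MvPolynomial.aeval G with hφdef
  set ψ : P →ₐ[K] P := MvPolynomial.aeval (fun j => A (G j)) with hψdef
  have hAφ : ∀ f : P, ψ f = A (φ f) := by
    intro f
    rw [hψdef, hφdef, ← MvPolynomial.comp_aeval]
    rfl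
  -- the generating set
  set E : Set P :=
    ({ p | ∃ i : Fin n, p = X i.castSucc - A (g i) } ∪ { A gn }) with hEdef
  set Jspan : Ideal P := Ideal.span E with hJdef
  have hgenX : ∀ j : Fin (n + 1), (X j : P) - ψ (X j) ∈ Jspan := by
    intro j
    induction j using Fin.lastCases with
    | last =>
      have : ψ (X (Fin.last n) : P) = X (Fin.last n) := by
        rw [hψdef, MvPolynomial.aeval_X]
        simp [hGdef, hAdef]
      rw [this, sub_self]
      exact Jspan.zero_mem
    | cast i =>
      have : ψ (X i.castSucc : P) = A (g i) := by
        rw [hψdef, MvPolynomial.aeval_X]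
        simp [hGdef]
      rw [this]
      exact Ideal.subset_span (Or.inl ⟨i, rfl⟩)
  have hsub : ∀ f : P, f - ψ f ∈ Jspan := by
    intro f
    induction f using MvPolynomial.induction_on with
    | C a =>
      have : ψ (C a : P) = C a := by
        rw [hψdef, MvPolynomial.aeval_C, MvPolynomial.algebraMap_eq]
      rw [this, sub_self]
      exact Jspan.zero_mem
    | add f₁ f₂ h₁ h₂ =>
      have := Jspan.add_mem h₁ h₂
      have heq : f₁ + f₂ - ψ (f₁ + f₂) = f₁ - ψ f₁ + (f₂ - ψ f₂) := by
        rw [map_add]; ring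
      rw [heq]
      exact this
    | mul_X f₁ i h₁ =>
      have heq : f₁ * X i - ψ (f₁ * X i) =
          (f₁ - ψ f₁) * X i + ψ f₁ * ((X i : P) - ψ (X i)) := by
        rw [map_mul]; ring
      rw [heq]
      exact Jspan.add_mem (Jspan.mul_mem_right _ h₁) (Jspan.mul_mem_left _ (hgenX i))
  -- evaluation of A-substituted polynomials
  have hApg : ∀ (q : Polynomial K) (p : Fin (n + 1) → K),
      MvPolynomial.eval p (A q) = Polynomial.eval (p (Fin.last n)) q := by
    intro q p
    have := Polynomial.aeval_algHom_apply (MvPolynomial.aeval p) (X (Fin.last n) : P) q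
    rw [MvPolynomial.aeval_X] at this
    rw [← mvae, hAdef, ← this, Polynomial.coe_aeval_eq_eval]
  -- span ≤ I
  have hJI : Jspan ≤ I := by
    rw [hJdef, Ideal.span_le, ← hNull]
    rintro f (⟨i, rfl⟩ | rfl)
    · intro p hp
      rw [map_sub, mvae, mvae, hApg, MvPolynomial.eval_X, heval_g i p ((hmemS p).mpr hp), sub_self]
    · intro p hp
      rw [mvae, hApg, Polynomial.eval_prod]
      exact Finset.prod_eq_zero ((hmemS p).mpr hp) (by simp [hvdef])
  -- I ≤ span
  have hIJ : I ≤ Jspan := by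
    intro f hf
    have hψf : ψ f ∈ Jspan := by
      have hdvd : gn ∣ φ f := by
        rcases eq_or_ne (φ f) 0 with h0 | h0
        · rw [h0]; exact dvd_zero _
        have hnodup : (S.val.map v).Nodup :=
          S.nodup.map_on fun x hx y hy => hvinj hx hy
        have hgnprod : gn = (Multiset.map (fun a => Polynomial.X - Polynomial.C a)
            (S.val.map v)).prod := by
          rw [hgndef, Finset.prod_eq_multiset_prod, Multiset.map_map]
          rfl
        rw [hgnprod]
        rw [Multiset.prod_X_sub_C_dvd_iff_le_roots h0, Multiset.le_iff_subset hnodup]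
        intro y hy
        obtain ⟨p, hpS, rfl⟩ := Multiset.mem_map.mp hy
        rw [Polynomial.mem_roots h0]
        -- show eval (v p) (φ f) = 0
        have hfun : (fun j => (Polynomial.aeval (R := K) (v p)) (G j)) = p := by
          funext j
          induction j using Fin.lastCases with
          | last => simp [hGdef, hvdef]
          | cast i =>
            simp only [hGdef, Fin.lastCases_castSucc, Polynomial.coe_aeval_eq_eval]
            exact heval_g i p hpS
        have hcomp : Polynomial.aeval (v p) (φ f) = MvPolynomial.aeval p f := by
          rw [hφdef, ← AlgHom.comp_apply, MvPolynomial.comp_aeval, hfun]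
        have hzero : Polynomial.eval (v p) (φ f) = 0 := by
          rw [← Polynomial.coe_aeval_eq_eval]
          show Polynomial.aeval (v p) (φ f) = 0
          rw [hcomp, mvae]
          exact ((hmemS p).mp hpS) f hf
        exact hzero
      obtain ⟨q, hq⟩ := hdvd
      have : ψ f = A gn * A q := by rw [hAφ f, hq, map_mul]
      rw [this]
      exact Ideal.mul_mem_right _ _ (Ideal.subset_span (Or.inr rfl))
    have := Jspan.add_mem (hsub f) hψf
    simpa using this
  exact ⟨g, gn, hgnmonic, hgnsf, hgndeg, le_antisymm hIJ hJI⟩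
end
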